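/- arXiv:2409.06658 — 5 statements merged into one kernel-verified Lean document; each statement's English description precedes it below -/
import Mathlib

section
/- Let r ≥ 1 and n ≥ 0 be integers, let P ∈ ℂ[z₁,…,z_r] be a symmetric polynomial of degree at most n+1 in each variable, and let Q₀,…,Q_n ∈ ℂ[z₁,…,z_r] be symmetric polynomials of degree exactly 1 in each variable. Let x = (x₁,…,x_r) and y = (y₁,…,y_r) be points of ℂ^r such that Q_k(x) ≠ Q_k(y) for every k, and for each k ∈ {0,…,n} let t_k ∈ ℂ^r be a vector satisfying e_m(t_k) = (Q_k(y)·e_m(x) − Q_k(x)·e_m(y)) / (Q_k(y) − Q_k(x)) for all m ∈ {1,…,r}, where e_m denotes the m-th elementary symmetric polynomial. Assume moreover that Q_j(x) ≠ 0 and Q_j(y) ≠ 0 for all j, and that Q_j(t_k) ≠ 0 for all j ≠ k. Then P(x)/∏_{j=0}^{n} Q_j(x) − P(y)/∏_{j=0}^{n} Q_j(y) = ∑_{k=0}^{n} [ P(t_k)/∏_{j=0, j≠k}^{n} Q_j(t_k) ] · ( 1/Q_k(x) − 1/Q_k(y) ). -/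
section AuxB
open Polynomial Finset

lemma partial_frac (n : ℕ) (p : Polynomial ℂ) (hp : p.natDegree ≤ n + 1)
    (lam mu : Fin (n + 1) → ℂ) (hlm : ∀ k, lam k ≠ mu k)
    (hl : ∀ k, lam k ≠ 0) (hm : ∀ k, mu k ≠ 0)
    (s : Fin (n + 1) → ℂ) (hs : ∀ k, s k = mu k / (mu k - lam k))
    (hq : ∀ j k, j ≠ k → mu j + (lam j - mu j) * s k ≠ 0) :
    p.eval 1 / ∏ j, lam j - p.eval 0 / ∏ j, mu j
      = ∑ k, (p.eval (s k) / ∏ j ∈ Finset.univ.erase k, (mu j + (lam j - mu j) * s k))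
          * (1 / lam k - 1 / mu k) := by
  classical
  set q : Fin (n + 1) → Polynomial ℂ := fun j => C (lam j - mu j) * X + C (mu j) with hqdef
  have hd : ∀ j, lam j - mu j ≠ 0 := fun j => sub_ne_zero.mpr (hlm j)
  have hqeval : ∀ j z, (q j).eval z = mu j + (lam j - mu j) * z := by
    intro j z; simp [hqdef]; ring
  have hroot : ∀ k, (q k).eval (s k) = 0 := by
    intro k
    rw [hqeval, hs]
    have h1 : mu k - lam k ≠ 0 := fun h => hd k (by linear_combination -h)
    field_simp
    ring
  have hq1 : ∀ j, (q j).eval 1 = lam j := by intro j; rw [hqeval]; ring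
  have hq0 : ∀ j, (q j).eval 0 = mu j := by intro j; rw [hqeval]; ring
  have hqdeg : ∀ j, (q j).natDegree = 1 := fun j => natDegree_linear (hd j)
  have hqne : ∀ j, q j ≠ 0 := fun j h => by
    have := hqdeg j; rw [h] at this; simp at this
  have hqlc : ∀ j, (q j).leadingCoeff = lam j - mu j := fun j => leadingCoeff_linear (hd j)
  -- the residues
  set R : Fin (n + 1) → ℂ :=
    fun k => p.eval (s k) / ∏ j ∈ Finset.univ.erase k, (q j).eval (s k) with hRdef
  have hprodne : ∀ k, ∏ j ∈ Finset.univ.erase k, (q j).eval (s k) ≠ 0 := by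
    intro k
    refine Finset.prod_ne_zero_iff.mpr fun j hj => ?_
    rw [hqeval]
    exact hq j k (Finset.ne_of_mem_erase hj)
  set g : Polynomial ℂ := p - ∑ k, C (R k) * ∏ j ∈ Finset.univ.erase k, q j with hgdef
  have hgdeg : g.natDegree ≤ n + 1 := by
    refine (natDegree_sub_le _ _).trans (max_le hp ?_)
    refine natDegree_sum_le_of_forall_le _ _ fun k _ => ?_
    refine (natDegree_mul_le).trans ?_
    simp only [natDegree_C, zero_add]
    refine (natDegree_prod_le _ _).trans ?_
    calc ∑ j ∈ Finset.univ.erase k, (q j).natDegree = ∑ j ∈ Finset.univ.erase k, 1 := by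
          simp [hqdeg]
      _ ≤ n + 1 := by simp
  set c : ℂ := g.coeff (n + 1) / ∏ j, (lam j - mu j) with hcdef
  set h : Polynomial ℂ := g - C c * ∏ j, q j with hhdef
  have hQprod_deg : (∏ j, q j).natDegree = n + 1 := by
    rw [natDegree_prod _ _ fun j _ => hqne j]; simp [hqdeg]
  have hQprod_lc : (∏ j, q j).leadingCoeff = ∏ j, (lam j - mu j) := by
    rw [leadingCoeff_prod]; simp [hqlc]
  have hdne : (∏ j, (lam j - mu j)) ≠ 0 := Finset.prod_ne_zero_iff.mpr fun j _ => hd j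
  have hhdeg : h.natDegree ≤ n := by
    rw [natDegree_le_iff_coeff_eq_zero]
    intro N hN
    rcases eq_or_lt_of_le (Nat.succ_le_of_lt hN) with hNe | hNl
    · rw [hhdef, coeff_sub, coeff_C_mul, ← hNe]
      have : (∏ j, q j).coeff (n + 1) = ∏ j, (lam j - mu j) := by
        rw [← hQprod_lc, leadingCoeff, hQprod_deg]
      rw [this, hcdef, div_mul_cancel₀ _ hdne, sub_self]
    · rw [hhdef, coeff_sub, coeff_eq_zero_of_natDegree_lt (hgdeg.trans_lt hNl),
        coeff_eq_zero_of_natDegree_lt, sub_self]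
      exact lt_of_le_of_lt (natDegree_C_mul_le _ _) (hQprod_deg.le.trans_lt hNl)
  have hheval : ∀ k, h.eval (s k) = 0 := by
    intro k
    rw [hhdef, hgdef]
    simp only [eval_sub, eval_mul, eval_C, eval_prod, eval_finset_sum]
    rw [Finset.prod_eq_zero (Finset.mem_univ k) (hroot k), mul_zero, sub_zero]
    rw [Finset.sum_eq_single k]
    · rw [hRdef]
      simp only []
      rw [div_mul_cancel₀ _ (hprodne k), sub_self]
    · intro k' _ hk'
      rw [Finset.prod_eq_zero (Finset.mem_erase.mpr ⟨(Ne.symm hk'), Finset.mem_univ k⟩)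
        (hroot k), mul_zero]
    · intro hk; exact absurd (Finset.mem_univ k) hk
  have hsinj : Function.Injective s := by
    intro k k' hkk'
    by_contra hne
    apply hq k k' hne
    rw [← hqeval, ← hkk', hroot]
  have hh0 : h = 0 := by
    refine eq_zero_of_natDegree_lt_card_of_eval_eq_zero h hsinj hheval ?_
    simpa using Nat.lt_succ_of_le hhdeg
  -- structure of p
  have hpstruct : p = C c * ∏ j, q j + ∑ k, C (R k) * ∏ j ∈ Finset.univ.erase k, q j := by
    have := sub_eq_zero.mp hh0
    rw [hgdef] at this
    linear_combination this
  have hlprod : (∏ j, lam j) ≠ 0 := Finset.prod_ne_zero_iff.mpr fun j _ => hl j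
  have hmprod : (∏ j, mu j) ≠ 0 := Finset.prod_ne_zero_iff.mpr fun j _ => hm j
  have hev1 : p.eval 1 = c * ∏ j, lam j + ∑ k, R k * ∏ j ∈ Finset.univ.erase k, lam j := by
    rw [hpstruct]; simp [eval_prod, eval_finset_sum, hq1]
  have hev0 : p.eval 0 = c * ∏ j, mu j + ∑ k, R k * ∏ j ∈ Finset.univ.erase k, mu j := by
    rw [hpstruct]; simp [eval_prod, eval_finset_sum, hq0]
  have key : ∀ (v : Fin (n + 1) → ℂ), (∀ j, v j ≠ 0) →
      (c * ∏ j, v j + ∑ k, R k * ∏ j ∈ Finset.univ.erase k, v j) / ∏ j, v j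
        = c + ∑ k, R k / v k := by
    intro v hv
    have hvprod : (∏ j, v j) ≠ 0 := Finset.prod_ne_zero_iff.mpr fun j _ => hv j
    rw [add_div, mul_div_cancel_right₀ _ hvprod, Finset.sum_div]
    congr 1
    refine Finset.sum_congr rfl fun k _ => ?_
    have h1 : (∏ j ∈ Finset.univ.erase k, v j) ≠ 0 :=
      Finset.prod_ne_zero_iff.mpr fun j _ => hv j
    rw [← Finset.mul_prod_erase _ v (Finset.mem_univ k), mul_comm (v k), mul_div_assoc,
      div_mul_cancel_left₀ h1, div_eq_mul_inv]
  rw [hev1, hev0, key lam hl, key mu hm]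
  have hrw : ∀ k, ∏ j ∈ Finset.univ.erase k, (mu j + (lam j - mu j) * s k)
      = ∏ j ∈ Finset.univ.erase k, (q j).eval (s k) := by
    intro k; exact Finset.prod_congr rfl fun j _ => (hqeval j (s k)).symm
  have : ∑ k, (p.eval (s k) / ∏ j ∈ Finset.univ.erase k, (mu j + (lam j - mu j) * s k))
          * (1 / lam k - 1 / mu k) = ∑ k, R k * (1 / lam k - 1 / mu k) := by
    refine Finset.sum_congr rfl fun k _ => ?_
    rw [hrw, hRdef]
  rw [this]
  rw [add_sub_add_left_eq_sub, ← Finset.sum_sub_distrib]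
  refine Finset.sum_congr rfl fun k _ => ?_
  rw [mul_sub, div_eq_mul_one_div, div_eq_mul_one_div]; ring

end AuxB

section AuxA
open MvPolynomial AddMonoidAlgebra Finset

lemma coord0_le_of_lex_le {r : ℕ} (hr : 0 < r) {a : Fin r →₀ ℕ} {b : Lex (Fin r →₀ ℕ)}
    (h : toLex a ≤ b) : a ⟨0, hr⟩ ≤ ofLex b ⟨0, hr⟩ := by
  rcases eq_or_lt_of_le h with h | h
  · rw [← h]; rfl
  · obtain ⟨j, hj, hlt⟩ := Finsupp.lex_def.mp h
    rcases eq_or_ne j ⟨0, hr⟩ with rfl | hne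
    · exact hlt.le
    · have hpos : (⟨0, hr⟩ : Fin r) < j := by
        rw [Fin.lt_def]
        exact Nat.pos_of_ne_zero fun h0 => hne (Fin.ext h0.symm).symm
      exact (hj _ hpos).le

lemma exists_esymm_rep {r : ℕ} (hr : 0 < r) (d : ℕ) :
    ∀ p : MvPolynomial (Fin r) ℂ, p.IsSymmetric →
      (∀ m ∈ p.support, m ⟨0, hr⟩ ≤ d) →
      ∃ F : MvPolynomial (Fin r) ℂ, F.totalDegree ≤ d ∧
        aeval (fun i : Fin r => esymm (Fin r) ℂ (i + 1)) F = p := by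
  intro p hsym hdeg
  induction' he : p.supDegree toLex using WellFoundedLT.induction with u ih generalizing p
  subst he
  obtain rfl | h0 := eq_or_ne p 0
  · exact ⟨0, by simp, by simp⟩
  have hd0 : (ofLex (p.supDegree toLex)) ⟨0, hr⟩ ≤ d := by
    obtain ⟨m, hm, hms⟩ := Finset.exists_mem_eq_sup p.support
      (MvPolynomial.support_nonempty.mpr h0) toLex
    have : p.supDegree toLex = toLex m := hms
    rw [this]
    exact hdeg m hm
  set t : Fin r →₀ ℕ :=
    Finsupp.equivFunOnFinite.symm (Fin.invAccumulate r r <| ↑(ofLex <| p.supDegree toLex))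
    with htdef
  have hdmono :
      (esymmAlgHomMonomial (Fin r) t <| p.leadingCoeff toLex).supDegree toLex
        = p.supDegree toLex := by
    rw [← ofLex_inj, DFunLike.ext'_iff, supDegree_esymmAlgHomMonomial _ _ le_rfl]
    · exact Fin.accumulate_invAccumulate le_rfl hsym.antitone_supDegree
    · rwa [Ne, leadingCoeff_eq_zero toLex.injective]
  have hlcmono : (esymmAlgHomMonomial (Fin r) t <| p.leadingCoeff toLex).leadingCoeff toLex
      = p.leadingCoeff toLex := leadingCoeff_esymmAlgHomMonomial t le_rfl
  have htsum : (t.sum fun _ k => k) ≤ d := by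
    have h1 : (t.sum fun _ k => k) = ∑ i, t i := by
      rw [Finsupp.sum_fintype]; intro; rfl
    have h2 : Fin.accumulate r r (↑t) ⟨0, hr⟩ = ∑ i, t i := by
      rw [Fin.accumulate_apply]
      refine Finset.sum_congr ?_ fun _ _ => rfl
      ext i; simp
    have h3 : Fin.accumulate r r (↑t) = ↑(ofLex <| p.supDegree toLex) := by
      have := Fin.accumulate_invAccumulate (le_refl r) hsym.antitone_supDegree
      rw [htdef]; simpa using this
    rw [h1, ← h2, h3]
    exact hd0
  have hmono_eq : aeval (fun i : Fin r => esymm (Fin r) ℂ (i + 1))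
      (monomial t (p.leadingCoeff toLex))
      = esymmAlgHomMonomial (Fin r) t (p.leadingCoeff toLex) := by
    rw [esymmAlgHomMonomial, esymmAlgHom_apply]
  have htd : (monomial t (p.leadingCoeff toLex)).totalDegree ≤ d := by
    refine le_trans (totalDegree_monomial_le _ _) htsum
  obtain he | hne := eq_or_ne p (esymmAlgHomMonomial (Fin r) t <| p.leadingCoeff toLex)
  · exact ⟨monomial t (p.leadingCoeff toLex), htd, by rw [hmono_eq, ← he]⟩
  have hlt := (supDegree_sub_lt_of_leadingCoeff_eq toLex.injective hdmono.symm ?_).resolve_right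
    hne
  · set q := p - esymmAlgHomMonomial (Fin r) t (p.leadingCoeff toLex) with hqdef
    have hqlt : q.supDegree toLex < p.supDegree toLex := hlt
    have hqsym : q.IsSymmetric := hsym.sub (isSymmetric_esymmAlgHomMonomial _ _)
    have hqdeg : ∀ m ∈ q.support, m ⟨0, hr⟩ ≤ d := by
      intro m hm
      refine le_trans (coord0_le_of_lex_le hr ?_) hd0
      exact le_trans (Finset.le_sup (f := toLex) hm) hqlt.le
    obtain ⟨F, hF1, hF2⟩ := ih _ hqlt q hqsym hqdeg rfl
    refine ⟨F + monomial t (p.leadingCoeff toLex), ?_, ?_⟩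
    · exact le_trans (totalDegree_add _ _) (max_le hF1 htd)
    · rw [map_add, hF2, hmono_eq, hqdef]; ring
  · rw [hlcmono]

end AuxA

section AuxC
open MvPolynomial Finset

lemma mv_aeval_eq_eval {r : ℕ} (z : Fin r → ℂ) (F : MvPolynomial (Fin r) ℂ) :
    aeval z F = eval z F := by
  rw [← coe_aeval_eq_eval]; rfl

lemma eval_aeval' {r : ℕ} (g : Fin r → MvPolynomial (Fin r) ℂ) (z : Fin r → ℂ)
    (F : MvPolynomial (Fin r) ℂ) :
    eval z (aeval g F) = eval (fun i => eval z (g i)) F := by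
  rw [← mv_aeval_eq_eval z, comp_aeval_apply]
  simp_rw [mv_aeval_eq_eval]

lemma polyeval_aeval {r : ℕ} (g : Fin r → Polynomial ℂ) (s : ℂ)
    (F : MvPolynomial (Fin r) ℂ) :
    Polynomial.eval s (aeval g F) = eval (fun i => Polynomial.eval s (g i)) F := by
  rw [← mv_aeval_eq_eval, ← Polynomial.coe_aeval_eq_eval]
  show (Polynomial.aeval s) ((aeval g) F) = _
  rw [comp_aeval_apply]

lemma natDegree_aeval_le {r : ℕ} (g : Fin r → Polynomial ℂ) (hg : ∀ i, (g i).natDegree ≤ 1)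
    (F : MvPolynomial (Fin r) ℂ) : (aeval g F).natDegree ≤ F.totalDegree := by
  conv_lhs => rw [F.as_sum, map_sum]
  refine Polynomial.natDegree_sum_le_of_forall_le _ _ fun m hm => ?_
  rw [aeval_monomial]
  refine (Polynomial.natDegree_mul_le).trans ?_
  have h1 : (algebraMap ℂ (Polynomial ℂ) (coeff m F)).natDegree = 0 := Polynomial.natDegree_C _
  rw [h1, zero_add]
  refine le_trans (Polynomial.natDegree_prod_le _ _) (le_trans ?_ (le_totalDegree hm))
  rw [Finsupp.sum]
  refine Finset.sum_le_sum fun i _ => ?_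
  exact le_trans Polynomial.natDegree_pow_le (by
    calc m i * (g i).natDegree ≤ m i * 1 := Nat.mul_le_mul_left _ (hg i)
      _ = m i := Nat.mul_one _)

lemma eval_of_natDegree_le_one (q : Polynomial ℂ) (h : q.natDegree ≤ 1) (s : ℂ) :
    q.eval s = q.eval 0 + (q.eval 1 - q.eval 0) * s := by
  conv_lhs => rw [Polynomial.eq_X_add_C_of_natDegree_le_one h]
  rw [Polynomial.eq_X_add_C_of_natDegree_le_one h]
  simp
  ring

lemma line_point (A B L M : ℂ) (h : M - L ≠ 0) :
    M / (M - L) * A + (1 - M / (M - L)) * B = (M * A - L * B) / (M - L) := by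
  field_simp
  ring


end AuxC

open MvPolynomial Finset

/-- Proposition 2.1: partial fraction expansion for symmetric rational functions. -/
theorem symmetric_partial_fraction
    (r n : ℕ) (hr : 1 ≤ r)
    (P : MvPolynomial (Fin r) ℂ) (hPsym : P.IsSymmetric)
    (hPdeg : ∀ i : Fin r, P.degreeOf i ≤ n + 1)
    (Q : Fin (n + 1) → MvPolynomial (Fin r) ℂ)
    (hQsym : ∀ k, (Q k).IsSymmetric)
    (hQdeg : ∀ k (i : Fin r), (Q k).degreeOf i = 1)
    (x y : Fin r → ℂ)
    (hxy : ∀ k, eval x (Q k) ≠ eval y (Q k))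
    (t : Fin (n + 1) → Fin r → ℂ)
    (ht : ∀ k, ∀ m ∈ Finset.Icc 1 r,
      eval (t k) (esymm (Fin r) ℂ m) =
        (eval y (Q k) * eval x (esymm (Fin r) ℂ m)
          - eval x (Q k) * eval y (esymm (Fin r) ℂ m))
          / (eval y (Q k) - eval x (Q k)))
    (hQx : ∀ j, eval x (Q j) ≠ 0) (hQy : ∀ j, eval y (Q j) ≠ 0)
    (hQt : ∀ j k, j ≠ k → eval (t k) (Q j) ≠ 0) :
    eval x P / ∏ j, eval x (Q j) - eval y P / ∏ j, eval y (Q j)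
      = ∑ k, (eval (t k) P / ∏ j ∈ Finset.univ.erase k, eval (t k) (Q j))
          * (1 / eval x (Q k) - 1 / eval y (Q k)) := by
  classical
  have hr0 : 0 < r := hr
  obtain ⟨FP, hFPd, hFPe⟩ := exists_esymm_rep hr0 (n + 1) P hPsym
    (fun m hm => degreeOf_le_iff.mp (hPdeg ⟨0, hr0⟩) m hm)
  have hFQ : ∀ k, ∃ F : MvPolynomial (Fin r) ℂ, F.totalDegree ≤ 1 ∧
      aeval (fun i : Fin r => esymm (Fin r) ℂ (i + 1)) F = Q k :=
    fun k => exists_esymm_rep hr0 1 (Q k) (hQsym k)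
      (fun m hm => degreeOf_le_iff.mp (le_of_eq (hQdeg k ⟨0, hr0⟩)) m hm)
  choose FQ hFQd hFQe using hFQ
  set a : Fin r → ℂ := fun i => eval x (esymm (Fin r) ℂ (i + 1)) with ha
  set b : Fin r → ℂ := fun i => eval y (esymm (Fin r) ℂ (i + 1)) with hb
  set line : Fin r → Polynomial ℂ :=
    fun i => Polynomial.C (a i) * Polynomial.X
      + Polynomial.C (b i) * (1 - Polynomial.X) with hline
  have hline_deg : ∀ i, (line i).natDegree ≤ 1 := by
    intro i
    rw [hline]
    refine le_trans (Polynomial.natDegree_add_le _ _) (max_le ?_ ?_)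
    · exact le_trans (Polynomial.natDegree_mul_le) (by simp)
    · refine le_trans (Polynomial.natDegree_mul_le) ?_
      simp only [Polynomial.natDegree_C, zero_add]
      exact le_trans (Polynomial.natDegree_sub_le _ _) (by simp)
  have hline_eval : ∀ (z : ℂ) i, Polynomial.eval z (line i) = z * a i + (1 - z) * b i := by
    intro z i; rw [hline]; simp; ring
  set lam : Fin (n + 1) → ℂ := fun k => eval x (Q k) with hlam
  set mu : Fin (n + 1) → ℂ := fun k => eval y (Q k) with hmu
  set s : Fin (n + 1) → ℂ := fun k => mu k / (mu k - lam k) with hsdef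
  have hml : ∀ k, mu k - lam k ≠ 0 := fun k => sub_ne_zero.mpr fun h => hxy k h.symm
  set p : Polynomial ℂ := aeval line FP with hpdef
  set qq : Fin (n + 1) → Polynomial ℂ := fun k => aeval line (FQ k) with hqqdef
  have hpd : p.natDegree ≤ n + 1 := le_trans (natDegree_aeval_le line hline_deg FP) hFPd
  -- evaluation of the line polys at special points
  have hlx : ∀ (F G : MvPolynomial (Fin r) ℂ),
      aeval (fun i : Fin r => esymm (Fin r) ℂ (i + 1)) F = G →
      Polynomial.eval 1 (aeval line F) = eval x G := by
    intro F G hFG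
    rw [polyeval_aeval, ← hFG, eval_aeval']
    have hfun : (fun i : Fin r => Polynomial.eval 1 (line i))
        = fun i : Fin r => eval x (esymm (Fin r) ℂ (i + 1)) := by
      funext i; rw [hline_eval]; simp only [ha, hb]; ring
    rw [hfun]
  have hly : ∀ (F G : MvPolynomial (Fin r) ℂ),
      aeval (fun i : Fin r => esymm (Fin r) ℂ (i + 1)) F = G →
      Polynomial.eval 0 (aeval line F) = eval y G := by
    intro F G hFG
    rw [polyeval_aeval, ← hFG, eval_aeval']
    have hfun : (fun i : Fin r => Polynomial.eval 0 (line i))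
        = fun i : Fin r => eval y (esymm (Fin r) ℂ (i + 1)) := by
      funext i; rw [hline_eval]; simp only [ha, hb]; ring
    rw [hfun]
  have hlt : ∀ (k : Fin (n + 1)) (F G : MvPolynomial (Fin r) ℂ),
      aeval (fun i : Fin r => esymm (Fin r) ℂ (i + 1)) F = G →
      Polynomial.eval (s k) (aeval line F) = eval (t k) G := by
    intro k F G hFG
    rw [polyeval_aeval, ← hFG, eval_aeval']
    have hfun : (fun i : Fin r => Polynomial.eval (s k) (line i))
        = fun i : Fin r => eval (t k) (esymm (Fin r) ℂ (i + 1)) := by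
      funext i
      rw [hline_eval]
      have him : (i : ℕ) + 1 ∈ Finset.Icc 1 r := by
        rw [Finset.mem_Icc]; exact ⟨Nat.le_add_left _ _, i.isLt⟩
      rw [ht k _ him]
      simp only [ha, hb, hsdef, hlam, hmu]
      exact line_point _ _ _ _ (hml k)
    rw [hfun]
  have hq_eval : ∀ k z, Polynomial.eval z (qq k) = mu k + (lam k - mu k) * z := by
    intro k z
    have hdq : (qq k).natDegree ≤ 1 :=
      le_trans (natDegree_aeval_le line hline_deg (FQ k)) (hFQd k)
    rw [eval_of_natDegree_le_one _ hdq, hqqdef]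
    rw [hly (FQ k) (Q k) (hFQe k), hlx (FQ k) (Q k) (hFQe k)]
  have hqt : ∀ j k, Polynomial.eval (s k) (qq j) = eval (t k) (Q j) :=
    fun j k => hlt k (FQ j) (Q j) (hFQe j)
  have main := partial_frac n p hpd lam mu hxy hQx hQy s (fun k => rfl)
    (fun j k hjk => by rw [← hq_eval j (s k), hqt j k]; exact hQt j k hjk)
  rw [hpdef] at main
  rw [hlx FP P hFPe, hly FP P hFPe] at main
  rw [main]
  refine Finset.sum_congr rfl fun k _ => ?_
  rw [show Polynomial.eval (s k) (aeval line FP) = eval (t k) P from hlt k FP P hFPe,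
    show (∏ j ∈ Finset.univ.erase k, (mu j + (lam j - mu j) * s k))
      = ∏ j ∈ Finset.univ.erase k, eval (t k) (Q j) from
      Finset.prod_congr rfl fun j _ => by rw [← hq_eval j (s k), hqt j k]]
end

section
/- Let r ≥ 1, n ≥ 0 and 0 ≤ l ≤ r−1 be integers, let P ∈ ℂ[z₁,…,z_r] be a symmetric polynomial of degree at most n in each variable, let b₀,…,b_n be pairwise distinct complex numbers, let x = (x₁,…,x_r) ∈ ℂ^r with x_m ≠ b_j for all m, j, and let y₁,…,y_l ∈ ℂ with y_m ≠ b_j for all m, j. For each k ∈ {0,…,n} let b_k^{(1)},…,b_k^{(r−1)} ∈ ℂ be numbers such that the polynomial identity (b_k − u)·∏_{m=1}^{r−1}(b_k^{(m)} − u) = ∏_{j=1}^{r}(x_j − u) − [∏_{j=1}^{l}(y_j − u)/(y_j − b_k)]·∏_{j=1}^{r}(x_j − b_k) holds in the variable u, and assume b_k^{(m)} ≠ b_j for all j, m. Then P(x)/∏_{j=0}^{n}∏_{m=1}^{r}(x_m − b_j) = ∑_{k=0}^{n} [ P(b_k, b_k^{(1)},…,b_k^{(r−1)}) / ( ∏_{j=0,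 j≠k}^{n}(b_k − b_j) · ∏_{j=0}^{n}∏_{m=1}^{r−1}(b_k^{(m)} − b_j) ) ] · ( ∑_{j=1}^{r} 1/(x_j − b_k) − ∑_{j=1}^{l} 1/(y_j − b_k) ). -/
open MvPolynomial Finset

/-- The vector `(c, v₁, …, v_{r-1}) ∈ ℂ^r` formed from a scalar and a vector
of length `r - 1`. -/
noncomputable def vecCons' {r : ℕ} (c : ℂ) (v : Fin (r - 1) → ℂ) : Fin r → ℂ :=
  fun i => if h : (i : ℕ) = 0 then c else v ⟨(i : ℕ) - 1, by
    have := i.isLt; omega⟩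


lemma multiset_finset_prod_comm {α β M : Type*} [CommMonoid M] (s : Finset α) (t : Multiset β)
    (f : α → β → M) :
    ∏ a ∈ s, (t.map (f a)).prod = (t.map (fun b => ∏ a ∈ s, f a b)).prod := by
  induction t using Multiset.induction with
  | empty => simp
  | cons b t ih => simp [Finset.prod_mul_distrib, ih]

lemma sum_superset_sign {R : Type*} [CommRing R] {α : Type*} [DecidableEq α] [Fintype α]
    (A : Finset α) :
    ∑ T ∈ Finset.univ.powerset.filter (fun T => A ⊆ T),
        (-1 : R) ^ (Fintype.card α + T.card)
      = if A = Finset.univ then 1 else 0 := by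
  have hbij : ∑ T ∈ Finset.univ.powerset.filter (fun T => A ⊆ T),
      (-1 : R) ^ (Fintype.card α + T.card)
      = ∑ S ∈ Aᶜ.powerset, (-1 : R) ^ (Fintype.card α + (A ∪ S).card) := by
    refine Finset.sum_nbij' (fun T => T \ A) (fun S => A ∪ S) ?_ ?_ ?_ ?_ ?_
    · intro T hT
      simp only [mem_filter, mem_powerset] at hT
      simp only [mem_powerset]
      intro a ha
      simp only [mem_sdiff] at ha
      simp [mem_compl, ha.2]
    · intro S hS
      simp only [mem_powerset] at hS
      simp only [mem_filter, mem_powerset]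
      exact ⟨subset_univ _, subset_union_left⟩
    · intro T hT
      simp only [mem_filter, mem_powerset] at hT
      exact Finset.union_sdiff_of_subset hT.2
    · intro S hS
      simp only [mem_powerset] at hS
      refine Finset.union_sdiff_cancel_left ?_
      rw [Finset.disjoint_left]
      intro a haA haS
      have := hS haS
      simp only [mem_compl] at this
      exact this haA
    · intro T hT
      simp only [mem_filter, mem_powerset] at hT
      show _ = (-1 : R) ^ (Fintype.card α + (A ∪ T \ A).card)
      rw [Finset.union_sdiff_of_subset hT.2]
  rw [hbij]
  have hcard : ∀ S ∈ Aᶜ.powerset, (A ∪ S).card = A.card + S.card := by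
    intro S hS
    simp only [mem_powerset] at hS
    rw [Finset.card_union_of_disjoint]
    rw [Finset.disjoint_left]
    intro a haA haS
    have := hS haS
    simp [mem_compl] at this
    exact this haA
  rw [Finset.sum_congr rfl (fun S hS => by rw [hcard S hS])]
  have : ∀ S : Finset α, (-1 : R) ^ (Fintype.card α + (A.card + S.card))
      = (-1) ^ (Fintype.card α + A.card) * (-1) ^ S.card := by
    intro S; rw [← pow_add]; ring_nf
  rw [Finset.sum_congr rfl (fun S _ => this S), ← Finset.mul_sum]
  have hz : ∑ S ∈ Aᶜ.powerset, (-1 : R) ^ S.card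
      = if Aᶜ = ∅ then 1 else 0 := by
    have := @Finset.sum_powerset_neg_one_pow_card α _ Aᶜ
    have := congrArg (fun z : ℤ => (z : R)) this
    push_cast at this
    convert this using 2
  rw [hz]
  by_cases h : A = Finset.univ
  · subst h
    simp [Finset.card_univ, ← pow_add, ← two_mul]
  · have : Aᶜ ≠ ∅ := by
      intro hc
      exact h (by simpa [Finset.compl_eq_empty_iff] using hc)
    simp [h, this]

lemma polarization {R : Type*} [CommRing R] {r : ℕ} (v : Fin r → Fin r → R) :
    ∑ T ∈ (Finset.univ : Finset (Fin r)).powerset,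
        (-1 : R) ^ (r + T.card) * ∏ i, ∑ s ∈ T, v i s
      = ∑ σ : Equiv.Perm (Fin r), ∏ i, v i (σ i) := by
  have key : ∀ T : Finset (Fin r),
      (-1 : R) ^ (r + T.card) * ∏ i, ∑ s ∈ T, v i s
        = ∑ φ : Fin r → Fin r,
            if Finset.image φ Finset.univ ⊆ T
              then (-1 : R) ^ (r + T.card) * ∏ i, v i (φ i) else 0 := by
    intro T
    rw [Finset.prod_univ_sum, Finset.mul_sum]
    have hc : ∀ φ : Fin r → Fin r,
        (Finset.image φ Finset.univ ⊆ T) ↔ φ ∈ Fintype.piFinset (fun _ => T) := by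
      intro φ; simp [Finset.image_subset_iff, Fintype.mem_piFinset]
    rw [Finset.sum_congr rfl (fun φ (_ : φ ∈ Finset.univ) => if_congr (hc φ) rfl rfl)]
    rw [Finset.sum_ite_mem, Finset.univ_inter]
  rw [Finset.sum_congr rfl (fun T _ => key T), Finset.sum_comm]
  have key2 : ∀ φ : Fin r → Fin r,
      (∑ T ∈ (Finset.univ : Finset (Fin r)).powerset,
        if Finset.image φ Finset.univ ⊆ T
          then (-1 : R) ^ (r + T.card) * ∏ i, v i (φ i) else 0)
      = (if Function.Surjective φ then 1 else 0) * ∏ i, v i (φ i) := by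
    intro φ
    rw [← Finset.sum_filter, ← Finset.sum_mul]
    congr 1
    have hs := sum_superset_sign (R := R) (Finset.image φ Finset.univ)
    rw [Fintype.card_fin] at hs
    rw [hs]
    have him : Finset.image φ Finset.univ = Finset.univ ↔ Function.Surjective φ := by
      constructor
      · intro h a
        have : a ∈ Finset.image φ Finset.univ := by rw [h]; exact Finset.mem_univ a
        obtain ⟨b, _, hb⟩ := Finset.mem_image.mp this
        exact ⟨b, hb⟩
      · intro h
        apply Finset.eq_univ_of_forall
        intro a
        obtain ⟨b, hb⟩ := h a
        exact Finset.mem_image.mpr ⟨b, Finset.mem_univ b, hb⟩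
    simp only [him]
  rw [Finset.sum_congr rfl (fun φ _ => key2 φ)]
  simp only [ite_mul, one_mul, zero_mul]
  rw [← Finset.sum_filter]
  symm
  refine Finset.sum_bij'
    (i := fun (σ : Equiv.Perm (Fin r)) (_ : σ ∈ Finset.univ) => (⇑σ : Fin r → Fin r))
    (j := fun φ hφ => Equiv.ofBijective φ
      (Finite.surjective_iff_bijective.mp (by simpa using hφ)))
    ?_ ?_ ?_ ?_ ?_
  · intro σ _
    simp only [Finset.mem_filter, Finset.mem_univ, true_and]
    exact σ.surjective
  · intro φ hφ; exact Finset.mem_univ _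
  · intro σ _
    apply Equiv.ext; intro i
    simp [Equiv.ofBijective]
  · intro φ hφ; rfl
  · intro σ _; rfl

lemma derivative_finset_prod {R : Type*} [CommRing R] {ι : Type*} [DecidableEq ι]
    (s : Finset ι) (f : ι → Polynomial R) :
    Polynomial.derivative (∏ i ∈ s, f i)
      = ∑ i ∈ s, (∏ j ∈ s.erase i, f j) * Polynomial.derivative (f i) := by
  rw [Finset.prod_eq_multiset_prod, Polynomial.derivative_prod, Finset.sum_eq_multiset_sum]
  congr 1

lemma sk_formula {r' n l : ℕ}
    (b : Fin (n + 1) → ℂ)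
    (x : Fin (r' + 1) → ℂ) (hxb : ∀ m j, x m ≠ b j)
    (y : Fin l → ℂ) (hyb : ∀ m j, y m ≠ b j)
    (b' : Fin (n + 1) → Fin r' → ℂ)
    (hpoly : ∀ k, ∀ u : ℂ,
      (b k - u) * ∏ m : Fin r', (b' k m - u)
        = (∏ j, (x j - u))
            - (∏ j : Fin l, ((y j - u) / (y j - b k))) * ∏ j, (x j - b k))
    (k : Fin (n + 1)) :
    (∑ j, 1 / (x j - b k)) - ∑ j : Fin l, 1 / (y j - b k)
      = (∏ m, (b' k m - b k)) / ∏ j, (x j - b k) := by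
  set Fk : ℂ := ∏ j, (x j - b k) with hFk
  set Gk : ℂ := ∏ j : Fin l, (y j - b k) with hGk
  have hFkne : Fk ≠ 0 := Finset.prod_ne_zero_iff.mpr fun j _ => sub_ne_zero.mpr (hxb j k)
  have hGkne : Gk ≠ 0 := Finset.prod_ne_zero_iff.mpr fun j _ => sub_ne_zero.mpr (hyb j k)
  set PF : Polynomial ℂ := ∏ j, (Polynomial.C (x j) - Polynomial.X) with hPF
  set PG : Polynomial ℂ := ∏ j : Fin l, (Polynomial.C (y j) - Polynomial.X) with hPG
  set PB : Polynomial ℂ := (Polynomial.C (b k) - Polynomial.X)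
      * ∏ m : Fin r', (Polynomial.C (b' k m) - Polynomial.X) with hPB
  have hQ : Polynomial.C Gk * PB = Polynomial.C Gk * PF - Polynomial.C Fk * PG := by
    apply Polynomial.funext
    intro u
    have hp := hpoly k u
    rw [Finset.prod_div_distrib] at hp
    simp only [Polynomial.eval_mul, Polynomial.eval_sub, Polynomial.eval_C, Polynomial.eval_X,
      Polynomial.eval_prod, hPB, hPF, hPG]
    rw [hp, ← hGk, ← hFk]
    field_simp
  have hder := congrArg (fun p : Polynomial ℂ => Polynomial.eval (b k) (Polynomial.derivative p)) hQ
  simp only [Polynomial.derivative_mul, Polynomial.derivative_C, Polynomial.derivative_sub,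
    Polynomial.eval_add, Polynomial.eval_sub, Polynomial.eval_mul, Polynomial.eval_C,
    zero_mul, zero_add] at hder
  -- compute the three derivative evaluations
  have ePB : Polynomial.eval (b k) (Polynomial.derivative PB) = -∏ m, (b' k m - b k) := by
    rw [hPB, Polynomial.derivative_mul]
    simp [Polynomial.eval_prod]
  have ePF : Polynomial.eval (b k) (Polynomial.derivative PF)
      = -(Fk * ∑ j, 1 / (x j - b k)) := by
    rw [hPF, derivative_finset_prod]
    simp only [Polynomial.derivative_sub, Polynomial.derivative_C, Polynomial.derivative_X,
      zero_sub, Polynomial.eval_finset_sum, Polynomial.eval_mul, Polynomial.eval_neg,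
      Polynomial.eval_one, Polynomial.eval_prod, Polynomial.eval_sub, Polynomial.eval_C,
      Polynomial.eval_X, mul_neg, mul_one]
    rw [Finset.mul_sum, ← Finset.sum_neg_distrib]
    refine Finset.sum_congr rfl ?_
    intro j _
    have : ∏ i ∈ univ.erase j, (x i - b k) = Fk / (x j - b k) := by
      rw [eq_div_iff (sub_ne_zero.mpr (hxb j k))]
      rw [hFk]
      exact Finset.prod_erase_mul _ _ (mem_univ j)
    rw [this]
    field_simp
  have ePG : Polynomial.eval (b k) (Polynomial.derivative PG)
      = -(Gk * ∑ j : Fin l, 1 / (y j - b k)) := by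
    rw [hPG, derivative_finset_prod]
    simp only [Polynomial.derivative_sub, Polynomial.derivative_C, Polynomial.derivative_X,
      zero_sub, Polynomial.eval_finset_sum, Polynomial.eval_mul, Polynomial.eval_neg,
      Polynomial.eval_one, Polynomial.eval_prod, Polynomial.eval_sub, Polynomial.eval_C,
      Polynomial.eval_X, mul_neg, mul_one]
    rw [Finset.mul_sum, ← Finset.sum_neg_distrib]
    refine Finset.sum_congr rfl ?_
    intro j _
    have : ∏ i ∈ univ.erase j, (y i - b k) = Gk / (y j - b k) := by
      rw [eq_div_iff (sub_ne_zero.mpr (hyb j k))]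
      rw [hGk]
      exact Finset.prod_erase_mul _ _ (mem_univ j)
    rw [this]
    field_simp
  rw [ePB, ePF, ePG] at hder
  rw [eq_div_iff hFkne]
  have key : Gk * ((∑ j, 1 / (x j - b k) - ∑ j : Fin l, 1 / (y j - b k)) * Fk)
      = Gk * ∏ m, (b' k m - b k) := by
    linear_combination hder
  exact mul_left_cancel₀ hGkne key

lemma core_identity {r' n l : ℕ}
    (b : Fin (n + 1) → ℂ) (hb : Function.Injective b)
    (x : Fin (r' + 1) → ℂ) (hxb : ∀ m j, x m ≠ b j)
    (y : Fin l → ℂ) (hyb : ∀ m j, y m ≠ b j)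
    (b' : Fin (n + 1) → Fin r' → ℂ)
    (hR : ∀ k (t : ℂ), (b k - t) * ∏ m, (b' k m - t)
        = (∏ j, (x j - t))
          - ((∏ j, (x j - b k)) / (∏ j : Fin l, (y j - b k))) * (∏ j : Fin l, (y j - t)))
    (hb' : ∀ k m j, b' k m ≠ b j)
    (h : Polynomial ℂ) (hdeg : h.natDegree ≤ n) :
    (∏ i, h.eval (x i)) / ∏ j, ∏ m, (x m - b j)
      = ∑ k, (h.eval (b k) * ∏ m, h.eval (b' k m))
          / ((∏ j, (x j - b k))
              * ∏ j ∈ Finset.univ.erase k, ((b k - b j) * ∏ m, (b' k m - b j))) := by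
  set F : ℂ → ℂ := fun t => ∏ j, (x j - t) with hF
  set G : ℂ → ℂ := fun t => ∏ j : Fin l, (y j - t) with hG
  set z : Fin (n + 1) → ℂ := fun k => F (b k) / G (b k) with hz_def
  have hFb : ∀ j, F (b j) ≠ 0 := fun j =>
    Finset.prod_ne_zero_iff.mpr (fun m _ => sub_ne_zero.mpr (hxb m j))
  have hGb : ∀ j, G (b j) ≠ 0 := fun j =>
    Finset.prod_ne_zero_iff.mpr (fun m _ => sub_ne_zero.mpr (hyb m j))
  have hRz : ∀ k (t : ℂ), F t - z k * G t = (b k - t) * ∏ m, (b' k m - t) := by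
    intro k t
    rw [hR k t]
  have hD : ∀ k j, j ≠ k → (b k - b j) * ∏ m, (b' k m - b j) ≠ 0 := by
    intro k j hjk
    refine mul_ne_zero (sub_ne_zero.mpr ?_)
      (Finset.prod_ne_zero_iff.mpr (fun m _ => sub_ne_zero.mpr (hb' k m j)))
    exact fun hc => hjk (hb hc).symm
  have hzinj : Function.Injective z := by
    intro k k' hkk'
    by_contra hne
    have h1 := hRz k (b k')
    rw [hkk'] at h1
    have : z k' * G (b k') = F (b k') := div_mul_cancel₀ _ (hGb k')
    rw [this, sub_self] at h1
    exact hD k k' (fun hc => hne hc.symm) h1.symm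
  -- factor h over its roots
  have hsplits : h.Splits := IsAlgClosed.splits h
  set c := h.leadingCoeff with hc
  set M := h.roots with hM
  have hfac : ∀ t : ℂ, h.eval t = c * (M.map (fun a => t - a)).prod := by
    intro t
    conv_lhs => rw [hsplits.eq_prod_roots]
    rw [Polynomial.eval_mul, Polynomial.eval_C, Polynomial.eval_multiset_prod, Multiset.map_map]
    congr 2
    refine Multiset.map_congr rfl ?_
    intro a _
    simp
  have hcM : Multiset.card M ≤ n := le_trans (Polynomial.card_roots' h) hdeg
  set N : Polynomial ℂ := Polynomial.C (c ^ (r' + 1))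
      * (M.map (fun a => Polynomial.C (F a) - Polynomial.C (G a) * Polynomial.X)).prod with hN
  have hNeval : ∀ t : ℂ, N.eval t = c ^ (r' + 1) * (M.map (fun a => F a - G a * t)).prod := by
    intro t
    rw [hN, Polynomial.eval_mul, Polynomial.eval_C, Polynomial.eval_multiset_prod,
      Multiset.map_map]
    congr 2
    refine Multiset.map_congr rfl ?_
    intro a _
    simp
  have hNdegn : N.natDegree ≤ n := by
    refine le_trans (Polynomial.natDegree_C_mul_le _ _) ?_
    refine le_trans (Polynomial.natDegree_multiset_prod_le _) ?_
    rw [Multiset.map_map]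
    refine le_trans (Multiset.sum_le_card_nsmul _ 1 ?_) ?_
    · intro d hd
      obtain ⟨a, _, rfl⟩ := Multiset.mem_map.mp hd
      refine le_trans (Polynomial.natDegree_sub_le _ _) ?_
      simp only [Polynomial.natDegree_C, max_le_iff]
      constructor
      · omega
      · exact le_trans (Polynomial.natDegree_mul_le) (by simp)
    · simp only [Multiset.card_map, smul_eq_mul, mul_one]
      exact hcM
  have hNdeg : N.degree < ((univ : Finset (Fin (n + 1))).card : ℕ) := by
    rw [Finset.card_univ, Fintype.card_fin]
    refine lt_of_le_of_lt (Polynomial.degree_le_natDegree) ?_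
    exact_mod_cast Nat.lt_succ_of_le hNdegn
  have hN0 : N.eval 0 = ∏ i, h.eval (x i) := by
    rw [hNeval 0]
    simp only [mul_zero, sub_zero]
    rw [Finset.prod_congr rfl (fun i (_ : i ∈ univ) => hfac (x i)), Finset.prod_mul_distrib,
      Finset.prod_const, Finset.card_univ, Fintype.card_fin,
      multiset_finset_prod_comm]
  have hNk : ∀ k, N.eval (z k) = h.eval (b k) * ∏ m, h.eval (b' k m) := by
    intro k
    rw [hNeval (z k)]
    have e1 : (M.map (fun a => F a - G a * z k)).prod
        = (M.map (fun a => (b k - a) * ∏ m, (b' k m - a))).prod := by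
      congr 1
      refine Multiset.map_congr rfl ?_
      intro a _
      rw [← hRz k a]
      ring
    rw [e1]
    have e2 : (M.map (fun a => (b k - a) * ∏ m, (b' k m - a))).prod
        = (M.map (fun a => b k - a)).prod * (M.map (fun a => ∏ m, (b' k m - a))).prod := by
      rw [← Multiset.prod_map_mul]
    rw [e2, ← multiset_finset_prod_comm]
    rw [hfac (b k), Finset.prod_congr rfl (fun m (_ : m ∈ univ) => hfac (b' k m)),
      Finset.prod_mul_distrib, Finset.prod_const, Finset.card_univ, Fintype.card_fin]
    ring
  -- Lagrange interpolation
  have hinj : Set.InjOn z ↑(univ : Finset (Fin (n + 1))) := hzinj.injOn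
  have hinterp := Lagrange.eq_interpolate hinj hNdeg
  have hev0 := congrArg (Polynomial.eval 0) hinterp
  rw [Lagrange.interpolate_apply, Polynomial.eval_finset_sum] at hev0
  simp only [Polynomial.eval_mul, Polynomial.eval_C] at hev0
  have hbasis : ∀ k : Fin (n + 1), (Lagrange.basis univ z k).eval 0
      = ∏ j ∈ univ.erase k, (F (b j) / ((b k - b j) * ∏ m, (b' k m - b j))) := by
    intro k
    rw [Lagrange.basis, Polynomial.eval_prod]
    refine Finset.prod_congr rfl ?_
    intro j hj
    have hjk : j ≠ k := (Finset.mem_erase.mp hj).1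
    have hDkj := hD k j hjk
    have hFj := hFb j
    have hGj := hGb j
    have hzkj : z k * G (b j) = F (b j) - (b k - b j) * ∏ m, (b' k m - b j) := by
      linear_combination -(hRz k (b j))
    simp only [Lagrange.basisDivisor, Polynomial.eval_mul, Polynomial.eval_C,
      Polynomial.eval_sub, Polynomial.eval_X]
    have hne : z k - z j ≠ 0 := sub_ne_zero.mpr (fun hc => hjk (hzinj hc).symm)
    rw [inv_mul_eq_div, div_eq_div_iff hne hDkj]
    have ej : z j * G (b j) = F (b j) := div_mul_cancel₀ _ hGj
    have key : (0 - z j) * ((b k - b j) * ∏ m, (b' k m - b j)) * G (b j)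
        = F (b j) * (z k - z j) * G (b j) := by
      linear_combination (F (b j) - (b k - b j) * ∏ m, (b' k m - b j)) * ej
        - F (b j) * hzkj
    exact mul_right_cancel₀ hGj key
  calc (∏ i, h.eval (x i)) / ∏ j, ∏ m, (x m - b j)
      = Polynomial.eval 0 N / ∏ j, F (b j) := by rw [hN0]
    _ = ∑ k, Polynomial.eval (z k) N * Polynomial.eval 0 (Lagrange.basis univ z k)
          / ∏ j, F (b j) := by rw [hev0, Finset.sum_div]
    _ = ∑ k, (h.eval (b k) * ∏ m, h.eval (b' k m))
          / ((∏ j, (x j - b k))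
              * ∏ j ∈ Finset.univ.erase k, ((b k - b j) * ∏ m, (b' k m - b j))) := by
      refine Finset.sum_congr rfl ?_
      intro k _
      rw [hNk k, hbasis k, Finset.prod_div_distrib]
      have hsplit : ∏ j, F (b j) = F (b k) * ∏ j ∈ univ.erase k, F (b j) :=
        (Finset.mul_prod_erase univ _ (mem_univ k)).symm
      rw [hsplit]
      have hprodFne : ∏ j ∈ univ.erase k, F (b j) ≠ 0 :=
        prod_ne_zero_iff.mpr fun j _ => hFb j
      have hprodDne : ∏ j ∈ univ.erase k, ((b k - b j) * ∏ m, (b' k m - b j)) ≠ 0 :=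
        prod_ne_zero_iff.mpr fun j hj => hD k j (mem_erase.mp hj).1
      have hFk : F (b k) ≠ 0 := hFb k
      field_simp
      exact (mul_div_cancel_right₀ _ hFk).symm

lemma span_symmetric {r n : ℕ} (P : MvPolynomial (Fin r) ℂ) (hPsym : P.IsSymmetric)
    (hPdeg : ∀ i, P.degreeOf i ≤ n) :
    P ∈ Submodule.span ℂ {Q : MvPolynomial (Fin r) ℂ |
      ∃ h : Polynomial ℂ, h.natDegree ≤ n ∧ Q = ∏ i, Polynomial.aeval (X i) h} := by
  set S := {Q : MvPolynomial (Fin r) ℂ |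
      ∃ h : Polynomial ℂ, h.natDegree ≤ n ∧ Q = ∏ i, Polynomial.aeval (X i) h} with hS
  set M := Submodule.span ℂ S with hM
  -- Step A : symmetrized monomials are in M
  have stepA : ∀ d : Fin r → ℕ, (∀ i, d i ≤ n) →
      (∑ σ : Equiv.Perm (Fin r), ∏ i, (X i : MvPolynomial (Fin r) ℂ) ^ (d (σ i))) ∈ M := by
    intro d hd
    rw [← polarization (R := MvPolynomial (Fin r) ℂ) (fun i s => X i ^ d s)]
    refine Submodule.sum_mem _ ?_
    intro T _
    have heq : (-1 : MvPolynomial (Fin r) ℂ) ^ (r + T.card) * ∏ i, ∑ s ∈ T, X i ^ d s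
        = ((-1 : ℂ) ^ (r + T.card)) • ∏ i, ∑ s ∈ T, (X i : MvPolynomial (Fin r) ℂ) ^ d s := by
      rw [Algebra.smul_def]
      congr 1
      rw [map_pow, map_neg, map_one]
    rw [heq]
    refine Submodule.smul_mem _ _ (Submodule.subset_span ?_)
    refine ⟨∑ s ∈ T, Polynomial.X ^ d s, ?_, ?_⟩
    · refine Polynomial.natDegree_sum_le_of_forall_le _ _ ?_
      intro s _
      simpa using hd s
    · refine Finset.prod_congr rfl ?_
      intro i _
      rw [map_sum]
      refine Finset.sum_congr rfl ?_
      intro s _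
      rw [map_pow, Polynomial.aeval_X]
  -- Step B
  have hcard : ((Fintype.card (Equiv.Perm (Fin r)) : ℂ)) ≠ 0 := by
    exact_mod_cast Nat.cast_ne_zero.mpr Fintype.card_ne_zero
  have hP : ((Fintype.card (Equiv.Perm (Fin r)) : ℂ)) • P = ∑ σ : Equiv.Perm (Fin r), rename σ P := by
    rw [Finset.sum_congr rfl (fun σ _ => hPsym σ), Finset.sum_const, Finset.card_univ,
      Nat.cast_smul_eq_nsmul]
  have hPmem : P = ((Fintype.card (Equiv.Perm (Fin r)) : ℂ))⁻¹ •
      ∑ σ : Equiv.Perm (Fin r), rename σ P := by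
    rw [← hP, inv_smul_smul₀ hcard]
  rw [hPmem]
  refine Submodule.smul_mem _ _ ?_
  have hsum : ∑ σ : Equiv.Perm (Fin r), (rename ⇑σ) P
      = ∑ d ∈ P.support, (coeff d P) •
          ∑ σ : Equiv.Perm (Fin r), ∏ i, (X i : MvPolynomial (Fin r) ℂ) ^ (d (σ i)) := by
    have expand : ∀ σ : Equiv.Perm (Fin r), (rename ⇑σ) P
        = ∑ d ∈ P.support, (coeff d P) • ∏ i, (X i : MvPolynomial (Fin r) ℂ) ^ (d (σ⁻¹ i)) := by
      intro σ
      conv_lhs => rw [← MvPolynomial.support_sum_monomial_coeff P]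
      rw [map_sum]
      refine Finset.sum_congr rfl ?_
      intro d _
      rw [rename_monomial]
      have : Finsupp.mapDomain (⇑σ) d = Finsupp.equivMapDomain σ d :=
        (Finsupp.equivMapDomain_eq_mapDomain σ d).symm
      rw [this]
      have hmono : (monomial (Finsupp.equivMapDomain σ d)) (coeff d P)
          = (coeff d P) • (monomial (Finsupp.equivMapDomain σ d)) (1 : ℂ) := by
        rw [MvPolynomial.smul_monomial, smul_eq_mul, mul_one]
      rw [hmono]
      congr 1
      rw [MvPolynomial.monomial_eq, map_one, one_mul]
      rw [Finsupp.prod_fintype _ _ (fun i => pow_zero _)]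
      refine Finset.prod_congr rfl ?_
      intro i _
      rw [Finsupp.equivMapDomain_apply]
      rfl
    rw [Finset.sum_congr rfl (fun σ _ => expand σ), Finset.sum_comm]
    refine Finset.sum_congr rfl ?_
    intro d _
    rw [Finset.smul_sum]
    refine Fintype.sum_equiv (Equiv.inv (Equiv.Perm (Fin r))) _ _ ?_
    intro σ
    rfl
  rw [hsum]
  refine Submodule.sum_mem _ ?_
  intro d hd
  refine Submodule.smul_mem _ _ (stepA _ ?_)
  intro i
  have := (MvPolynomial.degreeOf_lt_iff (n := i) (f := P) (d := n + 1) (Nat.succ_pos n)).mp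
    (Nat.lt_succ_of_le (hPdeg i)) d hd
  omega


/-- Equation (2.10): the degenerate partial fraction identity (fipf) for
factored denominators. -/
theorem factored_partial_fraction_degenerate
    (r n l : ℕ) (hr : 1 ≤ r) (hl : l < r)
    (P : MvPolynomial (Fin r) ℂ) (hPsym : P.IsSymmetric)
    (hPdeg : ∀ i : Fin r, P.degreeOf i ≤ n)
    (b : Fin (n + 1) → ℂ) (hb : Function.Injective b)
    (x : Fin r → ℂ)
    (hxb : ∀ (m : Fin r) (j : Fin (n + 1)), x m ≠ b j)
    (y : Fin l → ℂ)
    (hyb : ∀ (m : Fin l) (j : Fin (n + 1)), y m ≠ b j)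
    (b' : Fin (n + 1) → Fin (r - 1) → ℂ)
    (hpoly : ∀ k, ∀ u : ℂ,
      (b k - u) * ∏ m : Fin (r - 1), (b' k m - u)
        = (∏ j, (x j - u))
            - (∏ j : Fin l, ((y j - u) / (y j - b k))) * ∏ j, (x j - b k))
    (hb' : ∀ k (m : Fin (r - 1)) (j : Fin (n + 1)), b' k m ≠ b j) :
    eval x P / ∏ j, ∏ m, (x m - b j)
      = ∑ k, (eval (vecCons' (b k) (b' k)) P
            / ((∏ j ∈ Finset.univ.erase k, (b k - b j))
                * ∏ j, ∏ m : Fin (r - 1), (b' k m - b j)))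
          * ((∑ j, 1 / (x j - b k)) - ∑ j : Fin l, 1 / (y j - b k)) := by
  obtain ⟨r', rfl⟩ : ∃ r', r = r' + 1 := ⟨r - 1, by omega⟩
  have hb'' : ∀ k (m : Fin r') (j : Fin (n + 1)), b' k m ≠ b j := hb'
  have hpoly' : ∀ k, ∀ u : ℂ,
      (b k - u) * ∏ m : Fin r', (b' k m - u)
        = (∏ j, (x j - u))
            - (∏ j : Fin l, ((y j - u) / (y j - b k))) * ∏ j, (x j - b k) := hpoly
  have hSk : ∀ k, (∑ j, 1 / (x j - b k)) - ∑ j : Fin l, 1 / (y j - b k)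
      = (∏ m : Fin r', (b' k m - b k)) / ∏ j, (x j - b k) :=
    fun k => sk_formula b x hxb y hyb b' hpoly' k
  have hR : ∀ k (t : ℂ), (b k - t) * ∏ m : Fin r', (b' k m - t)
      = (∏ j, (x j - t))
        - ((∏ j, (x j - b k)) / (∏ j : Fin l, (y j - b k))) * (∏ j : Fin l, (y j - t)) := by
    intro k t
    rw [hpoly' k t, Finset.prod_div_distrib]
    ring
  -- the identity holds for everything in the span
  have hGood : ∀ Q ∈ Submodule.span ℂ {Q : MvPolynomial (Fin (r' + 1)) ℂ |
        ∃ h : Polynomial ℂ, h.natDegree ≤ n ∧ Q = ∏ i, Polynomial.aeval (X i) h},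
      eval x Q / ∏ j, ∏ m, (x m - b j)
        = ∑ k, eval (vecCons' (b k) (b' k)) Q
            / ((∏ j, (x j - b k))
              * ∏ j ∈ Finset.univ.erase k, ((b k - b j) * ∏ m : Fin r', (b' k m - b j))) := by
    intro Q hQ
    induction hQ using Submodule.span_induction with
    | mem Q hQmem =>
      obtain ⟨h, hdeg, rfl⟩ := hQmem
      have hcore := core_identity b hb x hxb y hyb b' hR hb'' h hdeg
      have e0 : ∀ (w : Fin (r' + 1) → ℂ) (i : Fin (r' + 1)),
          eval w (Polynomial.aeval (X i) h) = h.eval (w i) := by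
        intro w i
        rw [Polynomial.aeval_def, Polynomial.hom_eval₂]
        have hcomp : (MvPolynomial.eval w).comp
            (algebraMap ℂ (MvPolynomial (Fin (r' + 1)) ℂ)) = RingHom.id ℂ := by
          ext a; simp
        rw [hcomp]
        rw [MvPolynomial.eval_X]; rfl
      have e1 : eval x (∏ i, Polynomial.aeval (X i) h) = ∏ i, h.eval (x i) := by
        rw [map_prod]
        exact Finset.prod_congr rfl fun i _ => e0 x i
      have e2 : ∀ k, eval (vecCons' (b k) (b' k)) (∏ i, Polynomial.aeval (X i) h)
          = h.eval (b k) * ∏ m : Fin r', h.eval (b' k m) := by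
        intro k
        rw [map_prod, Finset.prod_congr rfl fun i _ => e0 (vecCons' (b k) (b' k)) i,
          Fin.prod_univ_succ]
        congr 1
      rw [e1, Finset.sum_congr rfl fun k _ => by rw [e2 k]]
      exact hcore
    | zero => simp
    | add Q1 Q2 hQ1 hQ2 ih1 ih2 =>
      simp only [map_add, add_div]
      rw [ih1, ih2, ← Finset.sum_add_distrib]
    | smul a Q hQm ih =>
      simp only [MvPolynomial.smul_eval]
      rw [mul_div_assoc, ih, Finset.mul_sum]
      refine Finset.sum_congr rfl fun k _ => ?_
      rw [mul_div_assoc]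
  have hmain := hGood P (span_symmetric P hPsym hPdeg)
  rw [hmain]
  refine Finset.sum_congr rfl fun k _ => ?_
  rw [hSk k]
  have hA : ∏ j ∈ Finset.univ.erase k, (b k - b j) ≠ 0 :=
    Finset.prod_ne_zero_iff.mpr fun j hj => sub_ne_zero.mpr
      (fun hc => (Finset.mem_erase.mp hj).1 (hb hc).symm)
  have hPk : (∏ m : Fin r', (b' k m - b k)) ≠ 0 :=
    Finset.prod_ne_zero_iff.mpr fun m _ => sub_ne_zero.mpr (hb'' k m k)
  have hC : ∏ j ∈ Finset.univ.erase k, (∏ m : Fin r', (b' k m - b j)) ≠ 0 :=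
    Finset.prod_ne_zero_iff.mpr fun j _ =>
      Finset.prod_ne_zero_iff.mpr fun m _ => sub_ne_zero.mpr (hb'' k m j)
  have hFk : (∏ j, (x j - b k)) ≠ 0 :=
    Finset.prod_ne_zero_iff.mpr fun j _ => sub_ne_zero.mpr (hxb j k)
  have hBsplit : ∏ j, ∏ m : Fin r', (b' k m - b j)
      = (∏ m : Fin r', (b' k m - b k))
        * ∏ j ∈ Finset.univ.erase k, (∏ m : Fin r', (b' k m - b j)) :=
    (Finset.mul_prod_erase univ _ (mem_univ k)).symm
  have hDsplit : ∏ j ∈ Finset.univ.erase k, ((b k - b j) * ∏ m : Fin r', (b' k m - b j))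
      = (∏ j ∈ Finset.univ.erase k, (b k - b j))
        * ∏ j ∈ Finset.univ.erase k, (∏ m : Fin r', (b' k m - b j)) :=
    Finset.prod_mul_distrib
  have hcast : (∏ j, ∏ m : Fin (r' + 1 - 1), (b' k m - b j))
      = ∏ j, ∏ m : Fin r', (b' k m - b j) := rfl
  rw [hcast, hBsplit, hDsplit]
  field_simp
end

section
/- Let n ≥ 0 be an integer, a ∈ ℂ, and let x ∈ ℂ be such that x + k ≠ 0 for all k ∈ {0,1,…,n}. Then (a+x)_n / (x)_{n+1} = ∑_{k=0}^{n} [ (−1)^k (a−k)_n / (k! (n−k)!) ] · 1/(x+k). -/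
open Finset

/-- The Pochhammer symbol `(z)_k = z(z+1)⋯(z+k-1)`, with `(z)_0 = 1`. -/
noncomputable def poch (z : ℂ) (k : ℕ) : ℂ := ∏ j ∈ Finset.range k, (z + j)

lemma fact_prod (m : ℕ) : ∏ j ∈ Finset.range m, ((j : ℂ) + 1) = m.factorial := by
  induction m with
  | zero => simp
  | succ m ih => rw [Finset.prod_range_succ, ih]; push_cast [Nat.factorial_succ]; ring

lemma prod_reflect_fact (k : ℕ) : ∏ j ∈ Finset.range k, ((k : ℂ) - j) = k.factorial := by
  rw [← Finset.prod_range_reflect, ← fact_prod k]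
  refine Finset.prod_congr rfl fun j hj => ?_
  simp only [Finset.mem_range] at hj
  have : ((k - 1 - j : ℕ) : ℂ) = (k : ℂ) - 1 - j := by
    have : k - 1 - j + (1 + j) = k := by omega
    have := congrArg (fun m : ℕ => (m : ℂ)) this
    push_cast at this
    linear_combination this
  rw [this]; ring

lemma prod_sub_erase (n k : ℕ) (hk : k ≤ n) :
    ∏ j ∈ (Finset.range (n+1)).erase k, ((j : ℂ) - k)
      = (-1) ^ k * k.factorial * (n - k).factorial := by
  have hsplit : (Finset.range (n+1)).erase k
      = Finset.range k ∪ Finset.Ico (k+1) (n+1) := by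
    ext j
    simp only [Finset.mem_erase, Finset.mem_range, Finset.mem_union, Finset.mem_Ico]
    omega
  have hdisj : Disjoint (Finset.range k) (Finset.Ico (k+1) (n+1)) := by
    rw [Finset.disjoint_left]
    intro j hj hj'
    simp only [Finset.mem_range] at hj
    simp only [Finset.mem_Ico] at hj'
    omega
  rw [hsplit, Finset.prod_union hdisj]
  have h1 : ∏ j ∈ Finset.range k, ((j : ℂ) - k) = (-1) ^ k * k.factorial := by
    have : ∏ j ∈ Finset.range k, ((j : ℂ) - k)
        = ∏ j ∈ Finset.range k, ((-1) * ((k : ℂ) - j)) := by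
      refine Finset.prod_congr rfl fun j _ => by ring
    rw [this, Finset.prod_mul_distrib, Finset.prod_const, prod_reflect_fact]
    simp
  have h2 : ∏ j ∈ Finset.Ico (k+1) (n+1), ((j : ℂ) - k) = (n - k).factorial := by
    rw [Finset.prod_Ico_eq_prod_range]
    have hc : n + 1 - (k + 1) = n - k := by omega
    rw [hc, ← fact_prod (n - k)]
    refine Finset.prod_congr rfl fun j hj => ?_
    push_cast
    try ring
  rw [h1, h2]; try ring

/-- Equation (2.1)/(2.2): the finite partial fraction expansion of the
truncated beta function. -/
theorem beta_partial_fraction (n : ℕ) (a x : ℂ)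
    (hx : ∀ k : ℕ, k ≤ n → x + k ≠ 0) :
    poch (a + x) n / poch x (n + 1)
      = ∑ k ∈ Finset.range (n + 1),
          ((-1 : ℂ) ^ k * poch (a - k) n
            / ((k.factorial : ℂ) * ((n - k).factorial : ℂ)))
          * (1 / (x + k)) := by
  classical
  set v : ℕ → ℂ := fun j => -(j : ℂ) with hv
  set p : Polynomial ℂ := ∏ j ∈ Finset.range n, (Polynomial.X + Polynomial.C (a + j)) with hp
  have hinj : Set.InjOn v (Finset.range (n+1)) := by
    intro i _ j _ h
    have : (i : ℂ) = j := by
      have := h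
      simp only [hv, neg_inj] at this
      exact this
    exact_mod_cast this
  have hdeg : p.degree < ((Finset.range (n+1)).card : WithBot ℕ) := by
    have hd : p.degree = n := by
      rw [hp, Polynomial.degree_prod]
      have h1 : ∀ j ∈ Finset.range n, (Polynomial.X + Polynomial.C (a + (j:ℂ))).degree = 1 :=
        fun j _ => Polynomial.degree_X_add_C _
      rw [Finset.sum_congr rfl h1, Finset.sum_const, Finset.card_range]
      simp
    rw [hd, Finset.card_range]
    exact_mod_cast Nat.lt_succ_self n
  have hint := Lagrange.eq_interpolate (f := p) (v := v) hinj hdeg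
  have hev := congrArg (Polynomial.eval x) hint
  -- evaluations of p
  have hevp : ∀ y : ℂ, p.eval y = ∏ j ∈ Finset.range n, (y + (a + j)) := by
    intro y
    rw [hp, Polynomial.eval_prod]
    simp
  have hpx : p.eval x = poch (a + x) n := by
    rw [hevp, poch]
    exact Finset.prod_congr rfl fun j _ => by ring
  have hpk : ∀ k : ℕ, p.eval (v k) = poch (a - k) n := by
    intro k
    rw [hevp, poch]
    refine Finset.prod_congr rfl fun j _ => ?_
    simp only [hv]
    ring
  -- nonvanishing
  have hpochx : poch x (n+1) ≠ 0 := by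
    rw [poch]
    refine Finset.prod_ne_zero_iff.mpr fun j hj => ?_
    exact hx j (by simpa using Nat.lt_succ_iff.mp (Finset.mem_range.mp hj))
  rw [div_eq_iff hpochx, Finset.sum_mul]
  calc poch (a + x) n = p.eval x := hpx.symm
    _ = Polynomial.eval x (Lagrange.interpolate (Finset.range (n+1)) v fun i => p.eval (v i)) := hev
    _ = ∑ k ∈ Finset.range (n+1), p.eval (v k)
          * ∏ j ∈ (Finset.range (n+1)).erase k, ((v k - v j)⁻¹ * (x - v j)) := by
        simp [Lagrange.interpolate_apply, Lagrange.basis, Lagrange.basisDivisor,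
          Polynomial.eval_prod, Polynomial.eval_finset_sum]
    _ = ∑ k ∈ Finset.range (n+1),
          ((-1 : ℂ) ^ k * poch (a - k) n
            / ((k.factorial : ℂ) * ((n - k).factorial : ℂ)))
          * (1 / (x + k)) * poch x (n+1) := by
        refine Finset.sum_congr rfl fun k hk => ?_
        have hkn : k ≤ n := Nat.lt_succ_iff.mp (Finset.mem_range.mp hk)
        have hsub : ∀ j : ℕ, v k - v j = (j : ℂ) - k := by intro j; simp [hv]; ring
        have hxv : ∀ j : ℕ, x - v j = x + j := by intro j; simp [hv]
        rw [Finset.prod_mul_distrib]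
        simp_rw [hsub, hxv]
        rw [Finset.prod_inv_distrib, prod_sub_erase n k hkn, hpk k]
        have hmul : (x + k) * ∏ j ∈ (Finset.range (n+1)).erase k, (x + (j:ℂ))
            = poch x (n+1) := by
          rw [poch]
          exact Finset.mul_prod_erase (Finset.range (n+1)) (fun j => x + (j:ℂ)) hk
        have hxk : x + (k : ℂ) ≠ 0 := hx k hkn
        have hprod : ∏ j ∈ (Finset.range (n+1)).erase k, (x + (j:ℂ))
            = poch x (n+1) / (x + k) := by
          field_simp [← hmul]
          linear_combination hmul
        rw [hprod]
        have hf1 : (k.factorial : ℂ) ≠ 0 := Nat.cast_ne_zero.mpr k.factorial_ne_zero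
        have hf2 : ((n - k).factorial : ℂ) ≠ 0 := Nat.cast_ne_zero.mpr (n - k).factorial_ne_zero
        have hneg : ((-1 : ℂ) ^ k) ≠ 0 := pow_ne_zero _ (by norm_num)
        have hinv : ((-1 : ℂ) ^ k)⁻¹ = (-1) ^ k := by
          rw [← inv_pow]; norm_num
        rw [mul_inv, mul_inv, hinv]
        field_simp
end

section
/- Let n ≥ 0 be an integer and let a, λ, x₁, x₂ ∈ ℂ be such that for all k ∈ {0,…,n}: x₁ + k ≠ 0, x₂ + k ≠ 0, λ + k ≠ 0, and λ − (λ−x₁)(λ−x₂)/(λ+k) + j ≠ 0 for all j ∈ {0,…,n}. Then (x₁+x₂+a)_n / ( (x₁)_{n+1} (x₂)_{n+1} ) = ∑_{k=0}^{n} [ (−1)^k / (k!(n−k)!) ] · [ ( λ − (λ−x₁)(λ−x₂)/(λ+k) + a − k )_n / ( λ − (λ−x₁)(λ−x₂)/(λ+k) )_{n+1} ] · ( 1/(x₁+k) + 1/(x₂+k) − 1/(λ+k) ). -/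
set_option maxHeartbeats 1000000
open Finset

lemma prod_cast_factorial (m : ℕ) : (∏ j ∈ Finset.range m, ((j : ℂ) + 1)) = (m.factorial : ℂ) := by
  rw [← Finset.prod_range_add_one_eq_factorial]
  push_cast
  rfl

lemma prod_erase_sub (n i : ℕ) (hi : i ≤ n) :
    ∏ j ∈ (Finset.range (n+1)).erase i, ((j : ℂ) - i)
      = (-1 : ℂ)^i * (i.factorial : ℂ) * ((n-i).factorial : ℂ) := by
  have hsplit : (Finset.range (n+1)).erase i = Finset.range i ∪ Finset.Ico (i+1) (n+1) := by
    ext x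
    simp only [Finset.mem_erase, Finset.mem_range, Finset.mem_union, Finset.mem_Ico]
    omega
  have hdisj : Disjoint (Finset.range i) (Finset.Ico (i+1) (n+1)) := by
    rw [Finset.disjoint_left]
    intro x hx hx'
    simp only [Finset.mem_range] at hx
    simp only [Finset.mem_Ico] at hx'
    omega
  rw [hsplit, Finset.prod_union hdisj]
  have h1 : ∏ j ∈ Finset.range i, ((j : ℂ) - i) = (-1 : ℂ)^i * (i.factorial : ℂ) := by
    have : ∏ j ∈ Finset.range i, ((j : ℂ) - i) = ∏ j ∈ Finset.range i, (-1) * ((i : ℂ) - j) := by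
      apply Finset.prod_congr rfl; intro j _; ring
    rw [this, Finset.prod_mul_distrib, Finset.prod_const, Finset.card_range]
    congr 1
    have := Finset.prod_range_reflect (fun j => (i : ℂ) - j) i
    rw [← this]
    rw [← prod_cast_factorial i]
    apply Finset.prod_congr rfl
    intro j hj
    simp only [Finset.mem_range] at hj
    have : (i - 1 - j : ℕ) = i - (j+1) := by omega
    rw [this, Nat.cast_sub (by omega)]
    push_cast
    ring
  have h2 : ∏ j ∈ Finset.Ico (i+1) (n+1), ((j : ℂ) - i) = ((n-i).factorial : ℂ) := by
    rw [Finset.prod_Ico_eq_prod_range]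
    have hc : (n + 1) - (i + 1) = n - i := by omega
    rw [hc, ← prod_cast_factorial (n - i)]
    apply Finset.prod_congr rfl
    intro j _
    push_cast
    ring
  rw [h1, h2]

lemma lagrange_poch (n : ℕ) (a z : ℂ) :
    poch (z + a) n = ∑ k ∈ Finset.range (n+1),
      ((-1:ℂ)^k * (k.factorial:ℂ) * ((n-k).factorial:ℂ))⁻¹ * poch (a - k) n *
        ∏ j ∈ (Finset.range (n+1)).erase k, (z + j) := by
  classical
  set s := Finset.range (n+1) with hs
  set v : ℕ → ℂ := fun k => -(k : ℂ) with hv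
  have hinj : Set.InjOn v (s : Set ℕ) := by
    intro x _ y _ h
    have : (x:ℂ) = y := by
      have := neg_injective h
      exact_mod_cast this
    exact_mod_cast this
  set p : Polynomial ℂ := ∏ j ∈ Finset.range n, (Polynomial.X + Polynomial.C (a + j)) with hp
  have hdeg : p.degree < s.card := by
    have h1 : p.degree ≤ n := by
      rw [hp]
      refine le_trans (Polynomial.degree_prod_le _ _) ?_
      have : ∀ j ∈ Finset.range n, (Polynomial.X + Polynomial.C (a + (j:ℂ))).degree = 1 := by
        intro j _
        exact Polynomial.degree_X_add_C _
      rw [Finset.sum_congr rfl this, Finset.sum_const, Finset.card_range]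
      simp
    have h2 : (s.card : WithBot ℕ) = ((n+1 : ℕ) : WithBot ℕ) := by
      rw [hs, Finset.card_range]
    rw [h2]
    refine lt_of_le_of_lt h1 ?_
    exact_mod_cast Nat.lt_succ_self n
  have key := Lagrange.eq_interpolate (v := v) (s := s) hinj hdeg
  have hz := congrArg (Polynomial.eval z) key
  have hL : p.eval z = poch (z + a) n := by
    rw [hp, Polynomial.eval_prod]
    unfold poch
    refine Finset.prod_congr rfl fun j _ => ?_
    simp
    ring
  have hnode : ∀ i : ℕ, p.eval (v i) = poch (a - i) n := by
    intro i
    rw [hp, Polynomial.eval_prod]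
    unfold poch
    refine Finset.prod_congr rfl fun j _ => ?_
    simp [hv]
    ring
  have hb : ∀ i ∈ s, Polynomial.eval z (Lagrange.basis s v i)
      = ((-1:ℂ)^i * (i.factorial:ℂ) * ((n-i).factorial:ℂ))⁻¹ * ∏ j ∈ s.erase i, (z + j) := by
    intro i hi
    rw [Lagrange.basis, Polynomial.eval_prod]
    have hterm : ∀ j ∈ s.erase i, Polynomial.eval z (Lagrange.basisDivisor (v i) (v j))
        = ((j:ℂ) - i)⁻¹ * (z + j) := by
      intro j _
      have h1 : v i - v j = (j:ℂ) - i := by simp [hv]; ring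
      have h2 : z - v j = z + j := by simp [hv]
      rw [Lagrange.basisDivisor, Polynomial.eval_mul, Polynomial.eval_C,
        Polynomial.eval_sub, Polynomial.eval_X, Polynomial.eval_C, h1, h2]
    rw [Finset.prod_congr rfl hterm, Finset.prod_mul_distrib, Finset.prod_inv_distrib]
    rw [prod_erase_sub n i (Finset.mem_range_succ_iff.mp hi)]
  rw [hL] at hz
  rw [hz, Lagrange.interpolate_apply, Polynomial.eval_finset_sum]
  refine Finset.sum_congr rfl fun i hi => ?_
  rw [Polynomial.eval_mul, Polynomial.eval_C, hb i hi, hnode i]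
  ring

lemma poch_pf (n : ℕ) (z a : ℂ) (hz : ∀ k : ℕ, k ≤ n → z + k ≠ 0) :
    poch (z + a) n / poch z (n+1) =
      ∑ k ∈ Finset.range (n+1), ((-1:ℂ)^k / ((k.factorial:ℂ) * ((n-k).factorial:ℂ)))
        * (poch (a - k) n / (z + k)) := by
  have hne : poch z (n+1) ≠ 0 := by
    unfold poch
    rw [Finset.prod_ne_zero_iff]
    intro j hj
    exact hz j (Finset.mem_range_succ_iff.mp hj)
  rw [div_eq_iff hne, lagrange_poch, Finset.sum_mul]
  refine Finset.sum_congr rfl fun k hk => ?_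
  have hzk := hz k (Finset.mem_range_succ_iff.mp hk)
  have hsplit : poch z (n+1) = (z + k) * ∏ j ∈ (Finset.range (n+1)).erase k, (z + j) :=
    (Finset.mul_prod_erase _ _ hk).symm
  have hinv : ((-1:ℂ)^k * (k.factorial:ℂ) * ((n-k).factorial:ℂ))⁻¹
      = (-1:ℂ)^k / ((k.factorial:ℂ) * ((n-k).factorial:ℂ)) := by
    rw [mul_assoc, mul_inv, ← inv_pow, div_eq_mul_inv]
    norm_num
  rw [hsplit, hinv]
  have hc : poch (a - (k:ℂ)) n / (z + k) * ((z + k) * (∏ j ∈ (Finset.range (n+1)).erase k, (z + j)))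
      = poch (a - (k:ℂ)) n * ∏ j ∈ (Finset.range (n+1)).erase k, (z + j) := by
    rw [← mul_assoc, div_mul_cancel₀ _ hzk]
  conv_rhs => rw [mul_assoc, hc]
  rw [mul_assoc]

lemma key_pair (x₁ x₂ lam : ℂ) (k j : ℂ)
    (h1 : x₁ + k ≠ 0) (h2 : x₂ + k ≠ 0) (h3 : x₁ + j ≠ 0) (h4 : x₂ + j ≠ 0)
    (h5 : lam + k ≠ 0) (h6 : lam + j ≠ 0)
    (h7 : lam - (lam - x₁) * (lam - x₂) / (lam + k) + j ≠ 0)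
    (h8 : lam - (lam - x₁) * (lam - x₂) / (lam + j) + k ≠ 0) :
    1 / ((x₁ + k) * (x₂ + j)) + 1 / ((x₁ + j) * (x₂ + k))
      = (1/(x₁+k) + 1/(x₂+k) - 1/(lam+k)) / (lam - (lam - x₁) * (lam - x₂) / (lam + k) + j)
      + (1/(x₁+j) + 1/(x₂+j) - 1/(lam+j)) / (lam - (lam - x₁) * (lam - x₂) / (lam + j) + k) := by
  have e7 : lam - (lam - x₁) * (lam - x₂) / (lam + k) + j
      = (lam * (x₁ + x₂ + k + j) + k * j - x₁ * x₂) / (lam + k) := by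
    field_simp
    ring
  have e8 : lam - (lam - x₁) * (lam - x₂) / (lam + j) + k
      = (lam * (x₁ + x₂ + k + j) + k * j - x₁ * x₂) / (lam + j) := by
    field_simp
    ring
  have hD : lam * (x₁ + x₂ + k + j) + k * j - x₁ * x₂ ≠ 0 := by
    intro h
    rw [e7, h, zero_div] at h7
    exact h7 rfl
  rw [e7, e8, div_div_eq_mul_div, div_div_eq_mul_div, ← add_div, eq_div_iff hD]
  field_simp
  ring


lemma sum_sym (s : Finset ℕ) (f g : ℕ → ℕ → ℂ)
    (h : ∀ k ∈ s, ∀ j ∈ s, f k j + f j k = g k j + g j k) :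
    ∑ k ∈ s, ∑ j ∈ s, f k j = ∑ k ∈ s, ∑ j ∈ s, g k j := by
  have hf : ∑ k ∈ s, ∑ j ∈ s, f j k = ∑ k ∈ s, ∑ j ∈ s, f k j := Finset.sum_comm
  have hg : ∑ k ∈ s, ∑ j ∈ s, g j k = ∑ k ∈ s, ∑ j ∈ s, g k j := Finset.sum_comm
  have hb : ∑ k ∈ s, ∑ j ∈ s, (f k j + f j k) = ∑ k ∈ s, ∑ j ∈ s, (g k j + g j k) :=
    Finset.sum_congr rfl fun k hk => Finset.sum_congr rfl fun j hj => h k hk j hj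
  have e1 : ∑ k ∈ s, ∑ j ∈ s, (f k j + f j k)
      = (∑ k ∈ s, ∑ j ∈ s, f k j) + (∑ k ∈ s, ∑ j ∈ s, f j k) := by
    simp [Finset.sum_add_distrib]
  have e2 : ∑ k ∈ s, ∑ j ∈ s, (g k j + g j k)
      = (∑ k ∈ s, ∑ j ∈ s, g k j) + (∑ k ∈ s, ∑ j ∈ s, g j k) := by
    simp [Finset.sum_add_distrib]
  apply mul_left_cancel₀ (two_ne_zero (α := ℂ))
  rw [two_mul, two_mul]
  calc (∑ k ∈ s, ∑ j ∈ s, f k j) + (∑ k ∈ s, ∑ j ∈ s, f k j)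
      = (∑ k ∈ s, ∑ j ∈ s, f k j) + (∑ k ∈ s, ∑ j ∈ s, f j k) := by rw [hf]
    _ = ∑ k ∈ s, ∑ j ∈ s, (f k j + f j k) := e1.symm
    _ = ∑ k ∈ s, ∑ j ∈ s, (g k j + g j k) := hb
    _ = (∑ k ∈ s, ∑ j ∈ s, g k j) + (∑ k ∈ s, ∑ j ∈ s, g j k) := e2
    _ = (∑ k ∈ s, ∑ j ∈ s, g k j) + (∑ k ∈ s, ∑ j ∈ s, g k j) := by rw [hg]

lemma pointwise_sym (n k j : ℕ) (a lam x₁ x₂ : ℂ)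
    (h1 : x₁ + k ≠ 0) (h2 : x₂ + k ≠ 0) (h3 : x₁ + j ≠ 0) (h4 : x₂ + j ≠ 0)
    (h5 : lam + k ≠ 0) (h6 : lam + j ≠ 0)
    (h7 : lam - (lam - x₁) * (lam - x₂) / (lam + k) + (j:ℂ) ≠ 0)
    (h8 : lam - (lam - x₁) * (lam - x₂) / (lam + j) + (k:ℂ) ≠ 0) :
    ((-1:ℂ)^k / ((k.factorial:ℂ) * ((n-k).factorial:ℂ)))
      * ((-1:ℂ)^j / ((j.factorial:ℂ) * ((n-j).factorial:ℂ)))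
      * poch (a - k - j) n * (1 / ((x₁ + k) * (x₂ + j)))
    + ((-1:ℂ)^j / ((j.factorial:ℂ) * ((n-j).factorial:ℂ)))
      * ((-1:ℂ)^k / ((k.factorial:ℂ) * ((n-k).factorial:ℂ)))
      * poch (a - j - k) n * (1 / ((x₁ + j) * (x₂ + k)))
    = ((-1:ℂ)^k / ((k.factorial:ℂ) * ((n-k).factorial:ℂ)))
      * ((-1:ℂ)^j / ((j.factorial:ℂ) * ((n-j).factorial:ℂ)))
      * poch (a - k - j) n
      * ((1 / (x₁ + k) + 1 / (x₂ + k) - 1 / (lam + k))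
          / (lam - (lam - x₁) * (lam - x₂) / (lam + k) + j))
    + ((-1:ℂ)^j / ((j.factorial:ℂ) * ((n-j).factorial:ℂ)))
      * ((-1:ℂ)^k / ((k.factorial:ℂ) * ((n-k).factorial:ℂ)))
      * poch (a - j - k) n
      * ((1 / (x₁ + j) + 1 / (x₂ + j) - 1 / (lam + j))
          / (lam - (lam - x₁) * (lam - x₂) / (lam + j) + k)) := by
  have ep : poch (a - (j:ℂ) - (k:ℂ)) n = poch (a - (k:ℂ) - (j:ℂ)) n := by
    rw [show a - (j:ℂ) - (k:ℂ) = a - (k:ℂ) - (j:ℂ) by ring]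
  rw [ep]
  have hkey := key_pair x₁ x₂ lam k j h1 h2 h3 h4 h5 h6 h7 h8
  rw [show ((-1:ℂ)^j / ((j.factorial:ℂ) * ((n-j).factorial:ℂ)))
      * ((-1:ℂ)^k / ((k.factorial:ℂ) * ((n-k).factorial:ℂ)))
      * poch (a - (k:ℂ) - (j:ℂ)) n
    = ((-1:ℂ)^k / ((k.factorial:ℂ) * ((n-k).factorial:ℂ)))
      * ((-1:ℂ)^j / ((j.factorial:ℂ) * ((n-j).factorial:ℂ)))
      * poch (a - (k:ℂ) - (j:ℂ)) n by ring]
  rw [← mul_add, ← mul_add, hkey]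

/-- Equation (3.3): the finite symmetric partial fraction expansion of the
truncated beta function. -/
theorem beta_symmetric_partial_fraction (n : ℕ) (a lam x₁ x₂ : ℂ)
    (hx₁ : ∀ k : ℕ, k ≤ n → x₁ + k ≠ 0)
    (hx₂ : ∀ k : ℕ, k ≤ n → x₂ + k ≠ 0)
    (hlam : ∀ k : ℕ, k ≤ n → lam + k ≠ 0)
    (hden : ∀ k : ℕ, k ≤ n → ∀ j : ℕ, j ≤ n →
      lam - (lam - x₁) * (lam - x₂) / (lam + k) + j ≠ 0) :
    poch (x₁ + x₂ + a) n / (poch x₁ (n + 1) * poch x₂ (n + 1))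
      = ∑ k ∈ Finset.range (n + 1),
          ((-1 : ℂ) ^ k / ((k.factorial : ℂ) * ((n - k).factorial : ℂ)))
          * (poch (lam - (lam - x₁) * (lam - x₂) / (lam + k) + a - k) n
              / poch (lam - (lam - x₁) * (lam - x₂) / (lam + k)) (n + 1))
          * (1 / (x₁ + k) + 1 / (x₂ + k) - 1 / (lam + k)) := by
  classical
  have hLHS : poch (x₁ + x₂ + a) n / (poch x₁ (n+1) * poch x₂ (n+1))
      = ∑ k ∈ Finset.range (n+1), ∑ j ∈ Finset.range (n+1),
          ((-1:ℂ)^k / ((k.factorial:ℂ) * ((n-k).factorial:ℂ)))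
          * ((-1:ℂ)^j / ((j.factorial:ℂ) * ((n-j).factorial:ℂ)))
          * poch (a - k - j) n * (1 / ((x₁ + k) * (x₂ + j))) := by
    have h1 := poch_pf n x₁ (x₂ + a) hx₁
    have e1 : x₁ + (x₂ + a) = x₁ + x₂ + a := by ring
    rw [e1] at h1
    rw [← div_div, h1, Finset.sum_div]
    refine Finset.sum_congr rfl fun k hk => ?_
    have h2 := poch_pf n x₂ (a - (k:ℂ)) hx₂
    have e2 : x₂ + (a - (k:ℂ)) = x₂ + a - (k:ℂ) := by ring
    rw [e2] at h2
    calc ((-1:ℂ)^k / ((k.factorial:ℂ) * ((n-k).factorial:ℂ)))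
          * (poch (x₂ + a - k) n / (x₁ + k)) / poch x₂ (n+1)
        = ((-1:ℂ)^k / ((k.factorial:ℂ) * ((n-k).factorial:ℂ))) / (x₁ + k)
            * (poch (x₂ + a - k) n / poch x₂ (n+1)) := by ring
      _ = ((-1:ℂ)^k / ((k.factorial:ℂ) * ((n-k).factorial:ℂ))) / (x₁ + k)
            * ∑ j ∈ Finset.range (n+1),
                ((-1:ℂ)^j / ((j.factorial:ℂ) * ((n-j).factorial:ℂ)))
                * (poch (a - k - j) n / (x₂ + j)) := by rw [h2]
      _ = _ := by
            rw [Finset.mul_sum]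
            refine Finset.sum_congr rfl fun j _ => ?_
            rw [show (1:ℂ)/((x₁+(k:ℂ))*(x₂+(j:ℂ))) = 1/(x₁+(k:ℂ)) * (1/(x₂+(j:ℂ))) by
              rw [div_mul_div_comm, one_mul]]
            ring
  have hRHS : (∑ k ∈ Finset.range (n + 1),
          ((-1 : ℂ) ^ k / ((k.factorial : ℂ) * ((n - k).factorial : ℂ)))
          * (poch (lam - (lam - x₁) * (lam - x₂) / (lam + k) + a - k) n
              / poch (lam - (lam - x₁) * (lam - x₂) / (lam + k)) (n + 1))
          * (1 / (x₁ + k) + 1 / (x₂ + k) - 1 / (lam + k)))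
      = ∑ k ∈ Finset.range (n+1), ∑ j ∈ Finset.range (n+1),
          ((-1:ℂ)^k / ((k.factorial:ℂ) * ((n-k).factorial:ℂ)))
          * ((-1:ℂ)^j / ((j.factorial:ℂ) * ((n-j).factorial:ℂ)))
          * poch (a - k - j) n
          * ((1 / (x₁ + k) + 1 / (x₂ + k) - 1 / (lam + k))
              / (lam - (lam - x₁) * (lam - x₂) / (lam + k) + j)) := by
    refine Finset.sum_congr rfl fun k hk => ?_
    have hk' := Finset.mem_range_succ_iff.mp hk
    have hy : ∀ j : ℕ, j ≤ n → lam - (lam - x₁) * (lam - x₂) / (lam + k) + (j:ℂ) ≠ 0 :=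
      fun j hj => hden k hk' j hj
    have h3 := poch_pf n (lam - (lam - x₁) * (lam - x₂) / (lam + k)) (a - (k:ℂ)) hy
    have e3 : lam - (lam - x₁) * (lam - x₂) / (lam + k) + (a - (k:ℂ))
        = lam - (lam - x₁) * (lam - x₂) / (lam + k) + a - (k:ℂ) := by ring
    rw [e3] at h3
    rw [h3, Finset.mul_sum, Finset.sum_mul]
    refine Finset.sum_congr rfl fun j _ => ?_
    ring
  rw [hLHS, hRHS]
  refine sum_sym _ _ _ fun k hk j hj => ?_
  have hkn := Finset.mem_range_succ_iff.mp hk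
  have hjn := Finset.mem_range_succ_iff.mp hj
  exact pointwise_sym n k j a lam x₁ x₂ (hx₁ k hkn) (hx₂ k hkn) (hx₁ j hjn) (hx₂ j hjn)
    (hlam k hkn) (hlam j hjn) (hden k hkn j hjn) (hden j hjn k hkn)
end

section
/- Let x₁, x₂ ∈ ℂ with 0 < Re(x₁), 0 < Re(x₂) and Re(x₁+x₂) < 1, and suppose x₁ and x₂ are not nonpositive integers. Then the series ∑_{k=0}^{∞} [ (−1)^k (x₁+x₂)_k / k! ] · ( 1/(x₁+k) + 1/(x₂+k) ) converges absolutely and its sum equals Γ(x₁)Γ(x₂)/Γ(x₁+x₂). -/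
open Finset Filter Topology Complex

open MeasureTheory Set

/-- The Pochhammer symbol `(z)_k = z(z+1)⋯(z+k-1)`, with `(z)_0 = 1`. -/

private lemma sum_inv_sq_le {σ : ℝ} (hσ : 0 < σ) (k : ℕ) :
    ∑ j ∈ range k, 1 / (σ + j)^2 ≤ 1/σ^2 + 1/σ := by
  have key : ∀ n : ℕ, ∑ j ∈ range (n+1), 1 / (σ + j)^2 ≤ 1/σ^2 + 1/σ - 1/(σ + n) := by
    intro n
    induction n with
    | zero => simp
    | succ n ih =>
      rw [Finset.sum_range_succ]
      have h1 : (0:ℝ) < σ + n := by positivity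
      have h2 : (0:ℝ) < σ + (n+1) := by positivity
      have hstep : 1 / (σ + ((n:ℕ)+1 : ℕ))^2 ≤ 1/(σ + n) - 1/(σ + (n+1)) := by
        push_cast
        rw [div_sub_div _ _ (ne_of_gt h1) (ne_of_gt h2)]
        rw [div_le_div_iff₀ (by positivity) (by positivity)]
        ring_nf
        nlinarith [sq_nonneg (σ + n)]
      calc ∑ j ∈ range (n+1), 1 / (σ + j)^2 + 1 / (σ + ((n:ℕ)+1:ℕ))^2
          ≤ (1/σ^2 + 1/σ - 1/(σ + n)) + (1/(σ + n) - 1/(σ + (n+1))) := by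
            exact add_le_add ih hstep
        _ = 1/σ^2 + 1/σ - 1/(σ + ((n:ℕ)+1:ℕ)) := by push_cast; ring
  cases k with
  | zero => simp; positivity
  | succ n =>
    refine (key n).trans ?_
    have : (0:ℝ) < σ + n := by positivity
    have : 0 ≤ 1/(σ+n) := by positivity
    linarith

private lemma factor_bound {σ τ : ℝ} (hσ : 0 < σ) (hσ1 : σ < 1) (j : ℕ) :
    Real.sqrt ((σ + j)^2 + τ^2) ≤
      ((j:ℝ)+1) * Real.exp (τ^2 / (2 * (σ + j)^2) + (σ - 1)/((j:ℝ)+1)) := by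
  have hsj : (0:ℝ) < σ + j := by positivity
  have h1 : (σ + j)^2 + τ^2 ≤ ((σ + j) * Real.exp (τ^2 / (2 * (σ + j)^2)))^2 := by
    rw [mul_pow, ← Real.exp_nat_mul]
    have : (σ+j)^2 + τ^2 = (σ+j)^2 * (1 + τ^2/(σ+j)^2) := by field_simp
    rw [this]
    have hexp : 1 + τ^2/(σ+j)^2 ≤ Real.exp ((2:ℕ) * (τ^2 / (2 * (σ + j)^2))) := by
      have : ((2:ℕ):ℝ) * (τ^2 / (2 * (σ + j)^2)) = τ^2/(σ+j)^2 := by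
        push_cast; field_simp
      rw [this]
      exact Real.add_one_le_exp _ |>.trans_eq' (by ring)
    nlinarith [sq_nonneg (σ+j), Real.exp_pos ((2:ℕ) * (τ^2 / (2 * (σ + j)^2))),
      sq_nonneg τ, mul_le_mul_of_nonneg_left hexp (sq_nonneg (σ+j))]
  have h2 : σ + j ≤ ((j:ℝ)+1) * Real.exp ((σ-1)/((j:ℝ)+1)) := by
    have hj1 : (0:ℝ) < (j:ℝ)+1 := by positivity
    have hh := Real.add_one_le_exp ((σ-1)/((j:ℝ)+1))
    calc σ + j = ((j:ℝ)+1) * ((σ-1)/((j:ℝ)+1) + 1) := by field_simp; ring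
      _ ≤ ((j:ℝ)+1) * Real.exp ((σ-1)/((j:ℝ)+1)) :=
          mul_le_mul_of_nonneg_left hh hj1.le
  calc Real.sqrt ((σ + j)^2 + τ^2)
      ≤ Real.sqrt (((σ + j) * Real.exp (τ^2 / (2 * (σ + j)^2)))^2) := Real.sqrt_le_sqrt h1
    _ = (σ + j) * Real.exp (τ^2 / (2 * (σ + j)^2)) := Real.sqrt_sq (by positivity)
    _ ≤ (((j:ℝ)+1) * Real.exp ((σ-1)/((j:ℝ)+1))) * Real.exp (τ^2 / (2 * (σ + j)^2)) :=
        mul_le_mul_of_nonneg_right h2 (Real.exp_pos _).le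
    _ = ((j:ℝ)+1) * Real.exp (τ^2 / (2 * (σ + j)^2) + (σ - 1)/((j:ℝ)+1)) := by
        rw [Real.exp_add]; ring

private lemma poch_norm_bound {s : ℂ} (h0 : 0 < s.re) (h1 : s.re < 1) (k : ℕ) :
    ‖poch s k‖ / k.factorial ≤
      Real.exp (s.im^2/2 * (1/s.re^2 + 1/s.re)) * ((k:ℝ)+1) ^ (s.re - 1) := by
  set σ := s.re
  set τ := s.im
  have hnorm : ∀ j : ℕ, ‖s + (j:ℂ)‖ = Real.sqrt ((σ + j)^2 + τ^2) := by
    intro j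
    rw [Complex.norm_def, Complex.normSq_apply]
    norm_num [Complex.add_re, Complex.add_im, Complex.natCast_re, Complex.natCast_im]
    ring_nf
    simp only [σ, τ]
    ring_nf
  have hprod : ‖poch s k‖ ≤ (k.factorial : ℝ) *
      Real.exp (∑ j ∈ range k, (τ^2 / (2 * (σ + j)^2) + (σ - 1)/((j:ℝ)+1))) := by
    rw [poch, norm_prod]
    calc ∏ j ∈ range k, ‖s + (j:ℂ)‖
        ≤ ∏ j ∈ range k, (((j:ℝ)+1) *
            Real.exp (τ^2 / (2 * (σ + j)^2) + (σ - 1)/((j:ℝ)+1))) := by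
          apply Finset.prod_le_prod
          · intro j _; positivity
          · intro j _; rw [hnorm j]; exact factor_bound h0 h1 j
      _ = (∏ j ∈ range k, ((j:ℝ)+1)) *
            ∏ j ∈ range k, Real.exp (τ^2 / (2 * (σ + j)^2) + (σ - 1)/((j:ℝ)+1)) := by
          rw [Finset.prod_mul_distrib]
      _ = (k.factorial : ℝ) *
            Real.exp (∑ j ∈ range k, (τ^2 / (2 * (σ + j)^2) + (σ - 1)/((j:ℝ)+1))) := by
          rw [Real.exp_sum]
          congr 1
          rw_mod_cast [Finset.prod_range_add_one_eq_factorial]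
  have hsum : ∑ j ∈ range k, (τ^2 / (2 * (σ + j)^2) + (σ - 1)/((j:ℝ)+1)) ≤
      τ^2/2 * (1/σ^2 + 1/σ) + (σ - 1) * Real.log ((k:ℝ)+1) := by
    rw [Finset.sum_add_distrib]
    have hA : ∑ j ∈ range k, τ^2 / (2 * (σ + j)^2) ≤ τ^2/2 * (1/σ^2 + 1/σ) := by
      have : ∀ j ∈ range k, τ^2 / (2 * (σ + j)^2) = τ^2/2 * (1/(σ+j)^2) := by
        intro j _
        have : (0:ℝ) < σ + j := by positivity
        field_simp
      rw [Finset.sum_congr rfl this, ← Finset.mul_sum]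
      have := sum_inv_sq_le h0 k
      nlinarith [sq_nonneg τ]
    have hB : ∑ j ∈ range k, (σ - 1)/((j:ℝ)+1) ≤ (σ - 1) * Real.log ((k:ℝ)+1) := by
      have hhar : Real.log ((k:ℝ)+1) ≤ ∑ j ∈ range k, 1/((j:ℝ)+1) := by
        have := log_add_one_le_harmonic k
        have hcast : ((harmonic k : ℚ) : ℝ) = ∑ j ∈ range k, 1/((j:ℝ)+1) := by
          rw [harmonic]
          push_cast
          simp [one_div]
        rw [hcast] at this
        exact_mod_cast this
      calc ∑ j ∈ range k, (σ - 1)/((j:ℝ)+1)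
          = (σ-1) * ∑ j ∈ range k, 1/((j:ℝ)+1) := by
            rw [Finset.mul_sum]; congr 1; ext j; ring
        _ ≤ (σ - 1) * Real.log ((k:ℝ)+1) :=
            mul_le_mul_of_nonpos_left hhar (by linarith)
    exact add_le_add hA hB
  have hfpos : (0:ℝ) < k.factorial := by positivity
  rw [div_le_iff₀ hfpos]
  calc ‖poch s k‖ ≤ (k.factorial : ℝ) *
      Real.exp (∑ j ∈ range k, (τ^2 / (2 * (σ + j)^2) + (σ - 1)/((j:ℝ)+1))) := hprod
    _ ≤ (k.factorial : ℝ) *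
        Real.exp (τ^2/2 * (1/σ^2 + 1/σ) + (σ - 1) * Real.log ((k:ℝ)+1)) := by
        exact mul_le_mul_of_nonneg_left (Real.exp_le_exp.mpr hsum) hfpos.le
    _ = Real.exp (τ^2/2 * (1/σ^2 + 1/σ)) * ((k:ℝ)+1) ^ (σ - 1) * k.factorial := by
        rw [Real.exp_add]
        have : ((k:ℝ)+1) ^ (σ - 1) = Real.exp (Real.log ((k:ℝ)+1) * (σ-1)) := by
          rw [← Real.rpow_def_of_pos (by positivity)]
        rw [this, mul_comm (Real.log _) _]
        ring

noncomputable def bcoef (s : ℂ) (k : ℕ) : ℂ := (-1)^k * poch s k / k.factorial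

private lemma bcoef_zero (s : ℂ) : bcoef s 0 = 1 := by
  simp [bcoef, poch]

private lemma bcoef_rec (s : ℂ) (k : ℕ) :
    ((k:ℂ)+1) * bcoef s (k+1) = -(s + k) * bcoef s k := by
  have hk : ((k:ℂ)+1) ≠ 0 := Nat.cast_add_one_ne_zero k
  have hf : ((k.factorial : ℂ)) ≠ 0 := by
    exact_mod_cast Nat.cast_ne_zero.mpr k.factorial_ne_zero
  rw [bcoef, bcoef, poch, poch, Finset.prod_range_succ]
  rw [Nat.factorial_succ]
  push_cast
  field_simp
  ring

private lemma bcoef_norm_le {s : ℂ} (h0 : 0 < s.re) (h1 : s.re < 1) (k : ℕ) :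
    ‖bcoef s k‖ ≤ Real.exp (s.im^2/2 * (1/s.re^2 + 1/s.re)) * ((k:ℝ)+1) ^ (s.re - 1) := by
  have : ‖bcoef s k‖ = ‖poch s k‖ / k.factorial := by
    rw [bcoef]
    rw [norm_div, norm_mul, norm_pow, norm_neg, norm_one, one_pow, one_mul]
    norm_num
  rw [this]
  exact poch_norm_bound h0 h1 k

private lemma bcoef_norm_le' {s : ℂ} (h0 : 0 < s.re) (h1 : s.re < 1) (k : ℕ) :
    ‖bcoef s k‖ ≤ Real.exp (s.im^2/2 * (1/s.re^2 + 1/s.re)) := by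
  refine (bcoef_norm_le h0 h1 k).trans ?_
  have h2 : ((k:ℝ)+1) ^ (s.re - 1) ≤ 1 :=
    Real.rpow_le_one_of_one_le_of_nonpos (by norm_num [Nat.cast_nonneg]) (by linarith)
  nlinarith [Real.exp_pos (s.im^2/2 * (1/s.re^2 + 1/s.re))]

private lemma summable_bcoef_pow {s : ℂ} (h0 : 0 < s.re) (h1 : s.re < 1) {w : ℂ}
    (hw : ‖w‖ < 1) : Summable (fun n : ℕ => bcoef s n * w^n) := by
  apply Summable.of_norm
  apply Summable.of_nonneg_of_le (fun n => norm_nonneg _)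
    (fun n => ?_) (((summable_geometric_of_lt_one (norm_nonneg w) hw)).mul_left
      (Real.exp (s.im^2/2 * (1/s.re^2 + 1/s.re))))
  rw [norm_mul, norm_pow]
  exact mul_le_mul_of_nonneg_right (bcoef_norm_le' h0 h1 n) (by positivity)

private lemma summable_nat_bcoef_pow {s : ℂ} (h0 : 0 < s.re) (h1 : s.re < 1) {w : ℂ}
    (hw : ‖w‖ < 1) : Summable (fun n : ℕ => (n:ℂ) * bcoef s n * w^(n-1)) := by
  rw [← summable_nat_add_iff 1]
  apply Summable.of_norm
  have hs : Summable (fun n : ℕ => Real.exp (s.im^2/2 * (1/s.re^2 + 1/s.re)) *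
      (((n:ℝ)+1) * ‖w‖^n)) := by
    apply Summable.mul_left
    have h1' : Summable (fun n : ℕ => (n:ℝ)^1 * ‖w‖^n) :=
      summable_pow_mul_geometric_of_norm_lt_one 1
        (by rwa [Real.norm_eq_abs, _root_.abs_of_nonneg (norm_nonneg w)])
    have h2' := summable_geometric_of_lt_one (norm_nonneg w) hw
    simpa [add_mul, pow_one] using h1'.add h2'
  apply Summable.of_nonneg_of_le (fun n => norm_nonneg _) (fun n => ?_) hs
  simp only [Nat.add_sub_cancel]
  rw [norm_mul, norm_mul, norm_pow]
  have h3 : ‖((n:ℂ)+1)‖ = (n:ℝ)+1 := by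
    rw [show ((n:ℂ)+1) = ((n+1 : ℕ):ℂ) by push_cast; ring]
    rw [Complex.norm_natCast]; push_cast; ring
  push_cast
  rw [h3]
  calc ((n:ℝ)+1) * ‖bcoef s (n+1)‖ * ‖w‖^n
      ≤ ((n:ℝ)+1) * Real.exp (s.im^2/2 * (1/s.re^2 + 1/s.re)) * ‖w‖^n := by
        have := bcoef_norm_le' h0 h1 (n+1)
        have hn : (0:ℝ) ≤ (n:ℝ)+1 := by positivity
        have hwn : (0:ℝ) ≤ ‖w‖^n := by positivity
        exact mul_le_mul_of_nonneg_right (mul_le_mul_of_nonneg_left this hn) hwn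
    _ = Real.exp (s.im^2/2 * (1/s.re^2 + 1/s.re)) * (((n:ℝ)+1) * ‖w‖^n) := by ring


private lemma ode_lemma {s : ℂ} (h0 : 0 < s.re) (h1 : s.re < 1) {w : ℂ} (hw : ‖w‖ < 1) :
    (∑' n : ℕ, (n:ℂ) * bcoef s n * w^(n-1)) * (1 + w)
      = -s * ∑' n : ℕ, bcoef s n * w^n := by
  set a : ℕ → ℂ := fun n => (n:ℂ) * bcoef s n * w^(n-1) with ha
  have hsumD := summable_nat_bcoef_pow h0 h1 hw
  have hD : HasSum a (∑' n, a n) := hsumD.hasSum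
  have ha0 : a 0 = 0 := by simp [ha]
  set D := ∑' n, a n with hDdef
  -- shifted sum
  have hshift : HasSum (fun n => a (n+1)) D := by
    have : HasSum a (D + ∑ i ∈ range 1, a i) := by
      simpa [ha0] using hD
    simpa using (hasSum_nat_add_iff' 1).mpr this
  have hshift' : HasSum (fun n : ℕ => ((n:ℂ)+1) * bcoef s (n+1) * w^n) D := by
    have hfun : (fun n : ℕ => a (n+1)) = (fun n : ℕ => ((n:ℂ)+1) * bcoef s (n+1) * w^n) := by
      funext n
      simp only [ha, Nat.add_sub_cancel]
      push_cast
      ring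
    rwa [hfun] at hshift
  -- w * D
  have hwD : HasSum (fun n : ℕ => (n:ℂ) * bcoef s n * w^n) (D * w) := by
    have h := hD.mul_right w
    have hfun : (fun n : ℕ => a n * w) = (fun n : ℕ => (n:ℂ) * bcoef s n * w^n) := by
      funext n
      cases n with
      | zero => simp [ha]
      | succ m =>
        simp only [ha, Nat.add_sub_cancel]
        rw [pow_succ]
        ring
    rwa [hfun] at h
  -- add
  have hadd : HasSum (fun n : ℕ => -s * (bcoef s n * w^n)) (D + D * w) := by
    have h := hshift'.add hwD
    have hfun : (fun n : ℕ => ((n:ℂ)+1) * bcoef s (n+1) * w^n + (n:ℂ) * bcoef s n * w^n)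
        = (fun n : ℕ => -s * (bcoef s n * w^n)) := by
      funext n
      have hrec := bcoef_rec s n
      calc ((n:ℂ)+1) * bcoef s (n+1) * w^n + (n:ℂ) * bcoef s n * w^n
        = (((n:ℂ)+1) * bcoef s (n+1) + (n:ℂ) * bcoef s n) * w^n := by ring
      _ = (-(s + n) * bcoef s n + (n:ℂ) * bcoef s n) * w^n := by rw [hrec]
      _ = -s * (bcoef s n * w^n) := by ring
    rwa [hfun] at h
  have hF : HasSum (fun n : ℕ => -s * (bcoef s n * w^n))
      (-s * ∑' n, bcoef s n * w^n) := (summable_bcoef_pow h0 h1 hw).hasSum.mul_left (-s)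
  have := hadd.unique hF
  rw [mul_add, mul_one]
  exact this

private lemma hasSum_binomial {s : ℂ} (h0 : 0 < s.re) (h1 : s.re < 1) {t : ℝ}
    (ht0 : 0 ≤ t) (ht1 : t < 1) :
    HasSum (fun k : ℕ => bcoef s k * (t:ℂ)^k) ((((1+t : ℝ)):ℂ)^(-s)) := by
  set r : ℝ := (1+t)/2 with hrdef
  have hr0 : 0 < r := by simp [hrdef]; linarith
  have hrt : t < r := by simp [hrdef]; linarith
  have hr1 : r < 1 := by simp [hrdef]; linarith
  set C := Real.exp (s.im^2/2 * (1/s.re^2 + 1/s.re)) with hC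
  set φ : ℝ → ℝ := fun u => r * Real.sin u with hφ
  have hφ_bdd : ∀ u, |φ u| ≤ r := by
    intro u
    rw [hφ]
    simp only [abs_mul, abs_of_pos hr0]
    calc r * |Real.sin u| ≤ r * 1 :=
      mul_le_mul_of_nonneg_left (Real.abs_sin_le_one u) hr0.le
      _ = r := mul_one r
  have hφd : ∀ u, HasDerivAt φ (r * Real.cos u) u := fun u =>
    (Real.hasDerivAt_sin u).const_mul r
  set g : ℕ → ℝ → ℂ := fun n u => bcoef s n * ((φ u : ℝ):ℂ)^n with hg
  set g' : ℕ → ℝ → ℂ := fun n u =>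
    bcoef s n * ((n:ℂ) * ((φ u : ℝ):ℂ)^(n-1) * ((r * Real.cos u : ℝ):ℂ)) with hg'
  have hgd : ∀ n u, HasDerivAt (g n) (g' n u) u := by
    intro n u
    have hinner : HasDerivAt (fun u : ℝ => ((φ u : ℝ):ℂ)) ((r * Real.cos u : ℝ):ℂ) u :=
      (hφd u).ofReal_comp
    have houter : HasDerivAt (fun z : ℂ => z^n)
        ((n:ℂ) * ((φ u : ℝ):ℂ)^(n-1)) ((φ u : ℝ):ℂ) := hasDerivAt_pow n _
    have := (houter.comp u hinner).const_mul (bcoef s n)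
    simpa [hg, hg', Function.comp, mul_assoc] using this
  have hbound : ∀ n u, ‖g' n u‖ ≤ C * ((n:ℝ) * r^n) := by
    intro n u
    have hb := bcoef_norm_le' h0 h1 n
    rw [← hC] at hb
    have e1 : ‖g' n u‖ = ‖bcoef s n‖ * ((n:ℝ) * |φ u|^(n-1) * |r * Real.cos u|) := by
      rw [hg', norm_mul, norm_mul, norm_mul, norm_pow, Complex.norm_natCast,
        Complex.norm_real, Complex.norm_real, Real.norm_eq_abs, Real.norm_eq_abs]
    rw [e1]
    cases n with
    | zero => simp
    | succ m =>
      have h1' : |φ u|^(m+1-1) ≤ r^m := by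
        simp only [Nat.add_sub_cancel]
        exact pow_le_pow_left₀ (abs_nonneg _) (hφ_bdd u) m
      have h2' : |r * Real.cos u| ≤ r := by
        rw [abs_mul, _root_.abs_of_pos hr0]
        calc r * |Real.cos u| ≤ r * 1 :=
          mul_le_mul_of_nonneg_left (Real.abs_cos_le_one u) hr0.le
          _ = r := mul_one r
      have hA : |φ u|^(m+1-1) * |r * Real.cos u| ≤ r^m * r :=
        mul_le_mul h1' h2' (abs_nonneg _) (by positivity)
      have hCpos : (0:ℝ) < C := by rw [hC]; positivity
      calc ‖bcoef s (m+1)‖ * (((m+1:ℕ):ℝ) * |φ u|^(m+1-1) * |r * Real.cos u|)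
          ≤ C * (((m+1:ℕ):ℝ) * |φ u|^(m+1-1) * |r * Real.cos u|) := by
            apply mul_le_mul_of_nonneg_right hb
            positivity
        _ = C * (((m+1:ℕ):ℝ) * (|φ u|^(m+1-1) * |r * Real.cos u|)) := by ring
        _ ≤ C * (((m+1:ℕ):ℝ) * (r^m * r)) := by
            apply mul_le_mul_of_nonneg_left _ hCpos.le
            apply mul_le_mul_of_nonneg_left hA
            positivity
        _ = C * (((m+1:ℕ):ℝ) * r^(m+1)) := by rw [pow_succ]
  have husum : Summable (fun n : ℕ => C * ((n:ℝ) * r^n)) := by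
    apply Summable.mul_left
    have := summable_pow_mul_geometric_of_norm_lt_one (R := ℝ) 1
      (r := r) (by rwa [Real.norm_eq_abs, _root_.abs_of_nonneg hr0.le])
    simpa [pow_one] using this
  have hg0 : Summable (fun n => g n 0) := by
    apply summable_of_ne_finset_zero (s := {0})
    intro n hn
    simp only [Finset.mem_singleton] at hn
    simp [hg, hφ, Real.sin_zero, zero_pow hn]
  have Fder : ∀ u, HasDerivAt (fun v => ∑' n, g n v) (∑' n, g' n u) u := fun u =>
    hasDerivAt_tsum husum hgd hbound hg0 u
  -- H and its derivative
  set F : ℝ → ℂ := fun v => ∑' n, g n v with hF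
  set H : ℝ → ℂ := fun v => F v * ((1:ℂ) + ((φ v : ℝ):ℂ))^s with hH
  have hslit : ∀ u, ((1:ℂ) + ((φ u : ℝ):ℂ)) ∈ slitPlane := by
    intro u
    rw [Complex.mem_slitPlane_iff]
    left
    have hlb := (abs_le.mp (hφ_bdd u)).1
    simp only [Complex.add_re, Complex.one_re, Complex.ofReal_re]
    linarith
  have hHd : ∀ u, HasDerivAt H 0 u := by
    intro u
    have hinner : HasDerivAt (fun v : ℝ => (1:ℂ) + ((φ v : ℝ):ℂ)) ((r * Real.cos u : ℝ):ℂ) u :=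
      ((hφd u).ofReal_comp).const_add (1:ℂ)
    have houter : HasDerivAt (fun z : ℂ => z^s)
        (s * ((1:ℂ) + ((φ u : ℝ):ℂ))^(s-1)) ((1:ℂ) + ((φ u : ℝ):ℂ)) :=
      (Complex.hasStrictDerivAt_cpow_const (hslit u)).hasDerivAt
    have hG : HasDerivAt (fun v : ℝ => ((1:ℂ) + ((φ v : ℝ):ℂ))^s)
        (s * ((1:ℂ) + ((φ u : ℝ):ℂ))^(s-1) * ((r * Real.cos u : ℝ):ℂ)) u :=
      by simpa using! houter.comp u hinner
    have := (Fder u).mul hG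
    convert this using 1
    · rfl
    · rfl
    -- show 0 = (∑' g' n u) * (1+φu)^s + F u * (s * (1+φu)^(s-1) * rc)
    set w : ℂ := ((φ u : ℝ):ℂ) with hw
    have hwnorm : ‖w‖ < 1 := by
      rw [hw, Complex.norm_real, Real.norm_eq_abs]
      exact lt_of_le_of_lt (hφ_bdd u) hr1
    set c : ℂ := ((r * Real.cos u : ℝ):ℂ) with hc
    have hD' : (∑' n, g' n u) = (∑' n : ℕ, (n:ℂ) * bcoef s n * w^(n-1)) * c := by
      rw [← tsum_mul_right]
      congr 1
      ext n
      rw [hg']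
      ring
    have h1w : ((1:ℂ) + w) ≠ 0 := by
      have hre : 0 < ((1:ℂ) + w).re := by
        rw [hw]
        simp only [Complex.add_re, Complex.one_re, Complex.ofReal_re]
        have hlb := (abs_le.mp (hφ_bdd u)).1
        linarith
      intro hcon
      rw [hcon] at hre
      simp at hre
    have hcpow : ((1:ℂ) + w)^s = ((1:ℂ) + w)^(s-1) * ((1:ℂ) + w) := by
      nth_rewrite 1 [show s = (s-1) + 1 by ring]
      rw [Complex.cpow_add _ _ h1w, Complex.cpow_one]
    have hFu : F u = ∑' n, bcoef s n * w^n := by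
      rw [hF, hg]
    rw [hD', hFu, hcpow]
    have := ode_lemma h0 h1 hwnorm
    calc (0:ℂ) = (((∑' n : ℕ, (n:ℂ) * bcoef s n * w^(n-1)) * (1+w))
          + s * (∑' n, bcoef s n * w^n)) * (((1:ℂ)+w)^(s-1) * c) := by
          rw [this]; ring
      _ = (∑' n : ℕ, (n:ℂ) * bcoef s n * w^(n-1)) * c * ((1+w)^(s-1) * (1+w)) +
          (∑' n, bcoef s n * w^n) * (s * (1+w)^(s-1) * c) := by ring
  -- H constant
  have hconst : ∀ u, H u = H 0 := by
    intro u
    have hdiff : Differentiable ℝ H := fun v => (hHd v).differentiableAt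
    exact is_const_of_deriv_eq_zero hdiff (fun v => (hHd v).deriv) u 0
  have hH0 : H 0 = 1 := by
    have hF0 : F 0 = 1 := by
      show (∑' n, g n 0) = 1
      have hgn : ∀ n, g n 0 = bcoef s n * ((0:ℝ):ℂ)^n := by
        intro n; show bcoef s n * ((φ 0 : ℝ):ℂ)^n = _; simp [hφ]
      rw [tsum_congr hgn, tsum_eq_single 0 (fun n hn => by simp [zero_pow hn])]
      simp [bcoef_zero]
    show F 0 * ((1:ℂ) + ((φ 0 : ℝ):ℂ))^s = 1
    rw [hF0]
    simp [hφ, Complex.one_cpow]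
  -- evaluate at arcsin (t/r)
  have htr : t / r ≤ 1 := (div_le_one hr0).mpr hrt.le
  have htr0 : (0:ℝ) ≤ t / r := by positivity
  set u₀ := Real.arcsin (t / r) with hu₀
  have hφu₀ : φ u₀ = t := by
    rw [hφ]
    show r * Real.sin u₀ = t
    rw [hu₀, Real.sin_arcsin (by linarith) htr]
    field_simp
  have key : F u₀ * ((1:ℂ) + (t:ℂ))^s = 1 := by
    have k0 := hconst u₀
    rw [hH0] at k0
    have : H u₀ = F u₀ * ((1:ℂ) + ((φ u₀ : ℝ):ℂ))^s := rfl
    rw [this, hφu₀] at k0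
    exact k0
  -- key : F u₀ * ((1:ℂ) + ↑t)^s = 1
  have htnorm : ‖(t:ℂ)‖ < 1 := by
    rw [Complex.norm_real, Real.norm_eq_abs, _root_.abs_of_nonneg ht0]
    exact ht1
  have hsumt := summable_bcoef_pow h0 h1 htnorm
  have hFt : F u₀ = ∑' n, bcoef s n * (t:ℂ)^n := by
    show (∑' n, g n u₀) = _
    refine tsum_congr fun n => ?_
    show bcoef s n * ((φ u₀ : ℝ):ℂ)^n = _
    rw [hφu₀]
  rw [hFt] at key
  have hzne : ((1:ℂ) + (t:ℂ))^s ≠ 0 := by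
    rw [Ne, Complex.cpow_eq_zero_iff]
    intro ⟨hc, _⟩
    have : ((1:ℂ) + (t:ℂ)).re = 0 := by rw [hc]; simp
    simp only [Complex.add_re, Complex.one_re, Complex.ofReal_re] at this
    linarith
  have hval : (∑' n, bcoef s n * (t:ℂ)^n) = (((1+t:ℝ)):ℂ)^(-s) := by
    have h2 : (∑' n, bcoef s n * (t:ℂ)^n) = (((1:ℂ) + (t:ℂ))^s)⁻¹ := by
      field_simp at key ⊢
      linear_combination key
    rw [h2, ← Complex.cpow_neg]
    congr 1
    push_cast
    ring
  rw [← hval]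
  exact hsumt.hasSum

private lemma kernel_integrable {a : ℂ} (ha : 0 < a.re) :
    IntegrableOn (fun u : ℝ => (u:ℂ)^(a-1) * (((1-u : ℝ)):ℂ)^(-a-1))
      (Ioo (0:ℝ) (1/2)) volume := by
  set K : ℝ → ℂ := fun u => (u:ℂ)^(a-1) * (((1-u : ℝ)):ℂ)^(-a-1) with hK
  have hcont : ContinuousOn K (Ioo (0:ℝ) (1/2)) := by
    intro u hu
    apply ContinuousAt.continuousWithinAt
    apply ContinuousAt.mul
    · exact (continuousAt_cpow_const
        (Complex.ofReal_mem_slitPlane.mpr hu.1)).comp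
        Complex.continuous_ofReal.continuousAt
    · have h1u : (0:ℝ) < 1 - u := by have h := hu.2; norm_num at h ⊢; linarith
      have hg1 : ContinuousAt (fun y : ℝ => (((1-y : ℝ)):ℂ)) u :=
        (Complex.continuous_ofReal.comp (continuous_const.sub continuous_id)).continuousAt
      exact hg1.cpow continuousAt_const
        (Or.inl (by simpa using h1u))
  set M : ℝ := (2⁻¹:ℝ) ^ (-a.re-1) with hM
  have hdom : IntegrableOn (fun u : ℝ => M * u ^ (a.re-1)) (Ioo (0:ℝ) (1/2)) volume := by
    have h1 : IntervalIntegrable (fun x : ℝ => x ^ (a.re-1)) volume 0 (1/2) :=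
      intervalIntegral.intervalIntegrable_rpow' (by linarith)
    have h2 : IntegrableOn (fun x : ℝ => x ^ (a.re-1)) (Ioc (0:ℝ) (1/2)) volume := by
      have := h1.1
      simpa using this
    exact (h2.mono_set Ioo_subset_Ioc_self).const_mul M
  apply Integrable.mono' hdom (hcont.aestronglyMeasurable measurableSet_Ioo)
  rw [ae_restrict_iff' measurableSet_Ioo]
  apply ae_of_all
  intro u hu
  have hu0 : (0:ℝ) < u := hu.1
  have hu2 : u < 1/2 := hu.2
  have h1u : (0:ℝ) < 1 - u := by linarith
  have e1 : ‖K u‖ = u ^ (a.re-1) * (1-u) ^ (-a.re-1) := by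
    rw [hK]
    simp only [norm_mul]
    rw [Complex.norm_cpow_eq_rpow_re_of_pos hu0, Complex.norm_cpow_eq_rpow_re_of_pos h1u]
    norm_num
  rw [e1]
  have h3 : (1-u) ^ (-a.re-1) ≤ M := by
    rw [hM]
    apply Real.rpow_le_rpow_of_nonpos (by norm_num) (by linarith) (by linarith)
  calc u ^ (a.re-1) * (1-u) ^ (-a.re-1) ≤ u ^ (a.re-1) * M :=
        mul_le_mul_of_nonneg_left h3 (Real.rpow_nonneg hu0.le _)
    _ = M * u ^ (a.re-1) := mul_comm _ _

private lemma kernel_integral {a : ℂ} (ha : 0 < a.re) :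
    ∫ u in Ioo (0:ℝ) (1/2), (u:ℂ)^(a-1) * (((1-u : ℝ)):ℂ)^(-a-1) = 1/a := by
  have hane : a ≠ 0 := by
    intro h; rw [h] at ha; simp at ha
  set K : ℝ → ℂ := fun u => (u:ℂ)^(a-1) * (((1-u : ℝ)):ℂ)^(-a-1) with hK
  set G : ℝ → ℂ := fun u => (u:ℂ)^a * ((((1-u : ℝ)):ℂ)^(-a) / a) with hG
  have hderiv : ∀ u ∈ Ioo (0:ℝ) (1/2), HasDerivAt G (K u) u := by
    intro u hu
    have hu0 : (0:ℝ) < u := hu.1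
    have h1u : (0:ℝ) < 1 - u := by have h := hu.2; norm_num at h ⊢; linarith
    have hune : (u:ℂ) ≠ 0 := Complex.ofReal_ne_zero.mpr hu0.ne'
    have h1une : ((1-u:ℝ):ℂ) ≠ 0 := Complex.ofReal_ne_zero.mpr h1u.ne'
    have hinner1 : HasDerivAt (fun y : ℝ => ((y:ℝ):ℂ)) 1 u := by
      simpa using (hasDerivAt_id u).ofReal_comp
    have h1 : HasDerivAt (fun y : ℝ => ((y:ℝ):ℂ)^a) (a * (u:ℂ)^(a-1)) u := by
      have houter := (Complex.hasStrictDerivAt_cpow_const (c := a)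
        (Complex.ofReal_mem_slitPlane.mpr hu0)).hasDerivAt
      simpa using! houter.comp u hinner1
    have hinner2 : HasDerivAt (fun y : ℝ => ((1-y:ℝ):ℂ)) (-1) u := by
      have h' : HasDerivAt (fun y : ℝ => (1-y:ℝ)) (-1) u := by
        simpa using (hasDerivAt_id u).const_sub 1
      simpa using h'.ofReal_comp
    have h2 : HasDerivAt (fun y : ℝ => ((1-y:ℝ):ℂ)^(-a)) (a * ((1-u:ℝ):ℂ)^(-a-1)) u := by
      have houter := (Complex.hasStrictDerivAt_cpow_const (c := -a)
        (Complex.ofReal_mem_slitPlane.mpr h1u)).hasDerivAt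
      have hcomp := houter.comp u hinner2
      have e : -a * ((1-u:ℝ):ℂ)^(-a-1) * (-1) = a * ((1-u:ℝ):ℂ)^(-a-1) := by ring
      simpa [e] using! hcomp
    have hprod := h1.mul (h2.div_const a)
    have e2 : a * (u:ℂ)^(a-1) * ((((1-u:ℝ):ℂ))^(-a) / a) +
        (u:ℂ)^a * (a * ((1-u:ℝ):ℂ)^(-a-1) / a) = K u := by
      rw [hK]
      have ea : (u:ℂ)^a = (u:ℂ)^(a-1) * (u:ℂ) := by
        nth_rewrite 1 [show a = (a-1)+1 by ring]
        rw [Complex.cpow_add _ _ hune, Complex.cpow_one]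
      have eb : ((1-u:ℝ):ℂ)^(-a) = ((1-u:ℝ):ℂ)^(-a-1) * ((1-u:ℝ):ℂ) := by
        nth_rewrite 1 [show -a = (-a-1)+1 by ring]
        rw [Complex.cpow_add _ _ h1une, Complex.cpow_one]
      have ecc : ((1-u:ℝ):ℂ) = 1 - (u:ℂ) := by push_cast; ring
      rw [ea, eb, ecc]
      field_simp
      push_cast
      ring
    rw [← e2]
    exact hprod
  have hint : IntervalIntegrable K volume 0 (1/2) := by
    rw [intervalIntegrable_iff, uIoc_of_le (by norm_num : (0:ℝ) ≤ 1/2)]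
    exact (integrableOn_Ioc_iff_integrableOn_Ioo).mpr (kernel_integrable ha)
  have h0 : Tendsto G (𝓝[>] (0:ℝ)) (𝓝 0) := by
    have hA : Tendsto (fun u : ℝ => (u:ℂ)^a) (𝓝[>] (0:ℝ)) (𝓝 0) := by
      have hb2 : Tendsto (fun u : ℝ => u ^ a.re) (𝓝[>] (0:ℝ)) (𝓝 0) := by
        have hca : ContinuousAt (fun u : ℝ => u ^ a.re) 0 :=
          Real.continuousAt_rpow_const 0 a.re (Or.inr ha.le)
        have h' : Tendsto (fun u : ℝ => u ^ a.re) (𝓝[>] (0:ℝ)) (𝓝 ((0:ℝ) ^ a.re)) :=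
          hca.tendsto.mono_left nhdsWithin_le_nhds
        rwa [Real.zero_rpow ha.ne'] at h'
      refine squeeze_zero_norm' ?_ hb2
      filter_upwards [self_mem_nhdsWithin] with u hu
      rw [Complex.norm_cpow_eq_rpow_re_of_pos hu]
    have hB : Tendsto (fun u : ℝ => (((1-u : ℝ)):ℂ)^(-a) / a) (𝓝[>] (0:ℝ))
        (𝓝 ((((1-(0:ℝ) : ℝ)):ℂ)^(-a) / a)) := by
      apply Tendsto.mono_left _ nhdsWithin_le_nhds
      apply ContinuousAt.tendsto
      apply ContinuousAt.div_const
      have hg1 : ContinuousAt (fun y : ℝ => (((1-y : ℝ)):ℂ)) 0 :=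
        (Complex.continuous_ofReal.comp (continuous_const.sub continuous_id)).continuousAt
      exact hg1.cpow continuousAt_const (Or.inl (by norm_num))
    have hAB := hA.mul hB
    rw [zero_mul] at hAB
    exact hAB
  have h12 : Tendsto G (𝓝[<] ((1:ℝ)/2)) (𝓝 (1/a)) := by
    have hca : ContinuousAt G ((1:ℝ)/2) := by
      apply ContinuousAt.mul
      · exact (continuousAt_cpow_const
          (Complex.ofReal_mem_slitPlane.mpr (by norm_num))).comp
          Complex.continuous_ofReal.continuousAt
      · apply ContinuousAt.div_const
        have hg1 : ContinuousAt (fun y : ℝ => (((1-y : ℝ)):ℂ)) ((1:ℝ)/2) :=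
          (Complex.continuous_ofReal.comp (continuous_const.sub continuous_id)).continuousAt
        exact hg1.cpow continuousAt_const (Or.inl (by norm_num))
    have hval : G ((1:ℝ)/2) = 1/a := by
      rw [hG]
      show (((1:ℝ)/2 : ℝ):ℂ)^a * ((((1-(1:ℝ)/2 : ℝ)):ℂ)^(-a) / a) = 1/a
      have he : ((1-(1:ℝ)/2 : ℝ)) = ((1:ℝ)/2 : ℝ) := by norm_num
      rw [he, Complex.cpow_neg]
      have hne : ((((1:ℝ)/2 : ℝ)):ℂ)^a ≠ 0 := by
        rw [Ne, Complex.cpow_eq_zero_iff]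
        push_neg
        intro hc
        exfalso
        have : (((1:ℝ)/2 : ℝ) : ℂ) ≠ 0 := by norm_num
        exact this hc
      field_simp
    rw [← hval]
    exact hca.tendsto.mono_left nhdsWithin_le_nhds
  have hFTC := intervalIntegral.integral_eq_sub_of_hasDerivAt_of_tendsto
    (by norm_num : (0:ℝ) < 1/2) hderiv hint h0 h12
  rw [intervalIntegral.integral_of_le (by norm_num : (0:ℝ) ≤ 1/2),
    integral_Ioc_eq_integral_Ioo] at hFTC
  rw [hFTC]
  ring


private lemma kernel_integral_real {b : ℝ} (hb : 0 < b) :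
    ∫ u in Ioo (0:ℝ) (1/2), u^(b-1) * (1-u)^(-b-1) = 1/b := by
  have hb' : 0 < ((b:ℂ)).re := by simpa using hb
  have hc := kernel_integral hb'
  have he : EqOn (fun u : ℝ => ((u^(b-1) * (1-u)^(-b-1) : ℝ) : ℂ))
      (fun u : ℝ => (u:ℂ)^((b:ℂ)-1) * ((1-u:ℝ):ℂ)^(-(b:ℂ)-1)) (Ioo (0:ℝ) (1/2)) := by
    intro u hu
    have h1u : (0:ℝ) < 1-u := by have h := hu.2; norm_num at h ⊢; linarith
    show ((u^(b-1) * (1-u)^(-b-1) : ℝ) : ℂ) = _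
    rw [Complex.ofReal_mul, Complex.ofReal_cpow hu.1.le, Complex.ofReal_cpow h1u.le]
    push_cast
    ring_nf
  have h2 : ((∫ u in Ioo (0:ℝ) (1/2), (u^(b-1) * (1-u)^(-b-1)) : ℝ) : ℂ) = ((1/b : ℝ):ℂ) := by
    have h3 : ∫ u in Ioo (0:ℝ) (1/2), ((u^(b-1) * (1-u)^(-b-1) : ℝ) : ℂ)
        = ((∫ u in Ioo (0:ℝ) (1/2), (u^(b-1) * (1-u)^(-b-1)) : ℝ) : ℂ) := integral_ofReal
    rw [← h3, setIntegral_congr_fun measurableSet_Ioo he, hc]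
    push_cast
    ring
  exact_mod_cast h2

private lemma hasSum_component {s x : ℂ} (hs0 : 0 < s.re) (hs1 : s.re < 1)
    {u : ℝ} (hu0 : 0 < u) (hu2 : u < 1/2) :
    HasSum (fun k : ℕ => bcoef s k * ((u:ℂ)^((x+k)-1) * ((1-u:ℝ):ℂ)^(-(x+k)-1)))
      ((u:ℂ)^(x-1) * ((1-u:ℝ):ℂ)^(s-x-1)) := by
  have h1u : (0:ℝ) < 1-u := by linarith
  set t : ℝ := u/(1-u) with htdef
  have ht0 : 0 ≤ t := by positivity
  have ht1 : t < 1 := by rw [htdef, div_lt_one h1u]; linarith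
  have hbin := hasSum_binomial hs0 hs1 ht0 ht1
  have hune : (u:ℂ) ≠ 0 := Complex.ofReal_ne_zero.mpr hu0.ne'
  have h1une : ((1-u:ℝ):ℂ) ≠ 0 := Complex.ofReal_ne_zero.mpr h1u.ne'
  have hmul := hbin.mul_left ((u:ℂ)^(x-1) * ((1-u:ℝ):ℂ)^(-x-1))
  have hterm : (fun k : ℕ => (u:ℂ)^(x-1) * ((1-u:ℝ):ℂ)^(-x-1) * (bcoef s k * (t:ℂ)^k))
      = (fun k : ℕ => bcoef s k * ((u:ℂ)^((x+k)-1) * ((1-u:ℝ):ℂ)^(-(x+k)-1))) := by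
    funext k
    have e1 : (u:ℂ)^((x+k)-1) = (u:ℂ)^(x-1) * (u:ℂ)^k := by
      rw [show (x+k)-1 = (x-1) + (k:ℂ) by ring, Complex.cpow_add _ _ hune,
        Complex.cpow_natCast]
    have e2 : ((1-u:ℝ):ℂ)^(-(x+k)-1) = ((1-u:ℝ):ℂ)^(-x-1) * (((1-u:ℝ):ℂ)^k)⁻¹ := by
      rw [show -(x+k)-1 = (-x-1) + (-(k:ℂ)) by ring, Complex.cpow_add _ _ h1une,
        Complex.cpow_neg, Complex.cpow_natCast]
    have e3 : ((t:ℝ):ℂ)^k = (u:ℂ)^k * (((1-u:ℝ):ℂ)^k)⁻¹ := by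
      rw [htdef]
      push_cast
      rw [div_pow, div_eq_mul_inv]
    rw [e1, e2, e3]
    ring
  have hval : (u:ℂ)^(x-1) * ((1-u:ℝ):ℂ)^(-x-1) * ((1+t:ℝ):ℂ)^(-s)
      = (u:ℂ)^(x-1) * ((1-u:ℝ):ℂ)^(s-x-1) := by
    have h1t : ((1+t:ℝ)) = (1-u)⁻¹ := by rw [htdef]; field_simp; ring
    have harg : ((1-u:ℝ):ℂ).arg ≠ Real.pi := by
      rw [Complex.arg_ofReal_of_nonneg h1u.le]
      exact Ne.symm Real.pi_ne_zero
    rw [h1t, Complex.ofReal_inv, Complex.inv_cpow _ _ harg, ← Complex.cpow_neg, neg_neg,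
      mul_assoc, ← Complex.cpow_add _ _ h1une]
    congr 2
    ring
  rw [hterm, hval] at hmul
  exact hmul


/-- The `λ → ∞` limit of the Saha–Sinha expansion: a ₄F₃ summation for the
beta function. -/
theorem beta_limit_expansion (x₁ x₂ : ℂ)
    (hre₁ : 0 < x₁.re) (hre₂ : 0 < x₂.re) (hre : (x₁ + x₂).re < 1)
    (hx₁ : ∀ m : ℕ, x₁ ≠ -(m : ℂ))
    (hx₂ : ∀ m : ℕ, x₂ ≠ -(m : ℂ)) :
    Summable (fun k : ℕ => ‖((-1 : ℂ) ^ k * poch (x₁ + x₂) k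
        / (k.factorial : ℂ)) * (1 / (x₁ + k) + 1 / (x₂ + k))‖)
    ∧ Tendsto (fun N : ℕ => ∑ k ∈ Finset.range N,
        ((-1 : ℂ) ^ k * poch (x₁ + x₂) k / (k.factorial : ℂ))
          * (1 / (x₁ + k) + 1 / (x₂ + k)))
      atTop
      (𝓝 (Complex.Gamma x₁ * Complex.Gamma x₂
            / Complex.Gamma (x₁ + x₂))) := by
  show Summable (fun k : ℕ => ‖bcoef (x₁+x₂) k * (1 / (x₁ + k) + 1 / (x₂ + k))‖)
    ∧ Tendsto (fun N : ℕ => ∑ k ∈ Finset.range N,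
        bcoef (x₁+x₂) k * (1 / (x₁ + k) + 1 / (x₂ + k))) atTop
      (𝓝 (Complex.Gamma x₁ * Complex.Gamma x₂ / Complex.Gamma (x₁ + x₂)))
  have hs0 : 0 < (x₁ + x₂).re := by rw [Complex.add_re]; linarith
  have hs1 : (x₁ + x₂).re < 1 := hre
  have hσ₁1 : x₁.re < 1 := by rw [Complex.add_re] at hs1; linarith
  have hσ₂1 : x₂.re < 1 := by rw [Complex.add_re] at hs1; linarith
  set s : ℂ := x₁ + x₂ with hsdef
  set E : ℝ := Real.exp (s.im^2/2 * (1/s.re^2 + 1/s.re)) with hE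
  have hEpos : 0 < E := Real.exp_pos _
  set C' : ℝ := E * (1/x₁.re + 1/x₂.re) with hC'
  -- majorant
  have hmaj : Summable (fun k : ℕ => C' * ((k:ℝ)+1)^(s.re-2)) := by
    apply Summable.mul_left
    have h1 : Summable (fun n : ℕ => ((n:ℝ))^(s.re-2)) :=
      Real.summable_nat_rpow.mpr (by linarith)
    have h2 := (summable_nat_add_iff 1).mpr h1
    have hfun : (fun n : ℕ => (((n+1:ℕ)):ℝ)^(s.re-2))
        = (fun n : ℕ => ((n:ℝ)+1)^(s.re-2)) := by
      funext n; push_cast; ring_nf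
    rwa [hfun] at h2
  -- key coefficient bound
  have hkey : ∀ k : ℕ, ‖bcoef s k‖ * (1/(x₁.re+k) + 1/(x₂.re+k))
      ≤ C' * ((k:ℝ)+1)^(s.re-2) := by
    intro k
    have hb := bcoef_norm_le hs0 hs1 k
    rw [← hE] at hb
    have hk1 : (0:ℝ) < (k:ℝ)+1 := by positivity
    have h₁ : 1/(x₁.re+k) ≤ (1/x₁.re) * (1/((k:ℝ)+1)) := by
      rw [div_mul_div_comm, one_mul]
      apply one_div_le_one_div_of_le (by positivity)
      nlinarith [Nat.cast_nonneg (α := ℝ) k]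
    have h₂ : 1/(x₂.re+k) ≤ (1/x₂.re) * (1/((k:ℝ)+1)) := by
      rw [div_mul_div_comm, one_mul]
      apply one_div_le_one_div_of_le (by positivity)
      nlinarith [Nat.cast_nonneg (α := ℝ) k]
    have hsum : 1/(x₁.re+k) + 1/(x₂.re+k) ≤ (1/x₁.re + 1/x₂.re) * (1/((k:ℝ)+1)) := by
      rw [add_mul]; exact add_le_add h₁ h₂
    have hnn : (0:ℝ) ≤ 1/(x₁.re+k) + 1/(x₂.re+k) := by positivity
    have hrw : ((k:ℝ)+1)^(s.re-1) * (1/((k:ℝ)+1)) = ((k:ℝ)+1)^(s.re-2) := by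
      rw [one_div, ← Real.rpow_neg_one ((k:ℝ)+1), ← Real.rpow_add hk1]
      congr 1
      ring
    calc ‖bcoef s k‖ * (1/(x₁.re+k) + 1/(x₂.re+k))
        ≤ (E * ((k:ℝ)+1)^(s.re-1)) * ((1/x₁.re + 1/x₂.re) * (1/((k:ℝ)+1))) := by
          apply mul_le_mul hb hsum hnn
          positivity
      _ = C' * (((k:ℝ)+1)^(s.re-1) * (1/((k:ℝ)+1))) := by rw [hC']; ring
      _ = C' * ((k:ℝ)+1)^(s.re-2) := by rw [hrw]
  -- norm of inverse bound
  have hinv : ∀ (x : ℂ), 0 < x.re → ∀ k : ℕ, ‖1/(x + (k:ℂ))‖ ≤ 1/(x.re+k) := by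
    intro x hx k
    have hrepos : 0 < (x + (k:ℂ)).re := by
      rw [Complex.add_re, Complex.natCast_re]; positivity
    have hle : (x + (k:ℂ)).re ≤ ‖x + (k:ℂ)‖ := by
      exact Complex.re_le_norm _
    rw [norm_div, norm_one]
    have : (x.re+(k:ℝ)) ≤ ‖x + (k:ℂ)‖ := by
      rw [Complex.add_re, Complex.natCast_re] at hle
      exact hle
    exact one_div_le_one_div_of_le (by positivity) this
  -- term bound
  have hterm_bd : ∀ k : ℕ, ‖bcoef s k * (1 / (x₁ + k) + 1 / (x₂ + k))‖
      ≤ C' * ((k:ℝ)+1)^(s.re-2) := by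
    intro k
    refine le_trans ?_ (hkey k)
    rw [norm_mul]
    refine mul_le_mul_of_nonneg_left ?_ (norm_nonneg _)
    calc ‖1/(x₁+(k:ℂ)) + 1/(x₂+(k:ℂ))‖ ≤ ‖1/(x₁+(k:ℂ))‖ + ‖1/(x₂+(k:ℂ))‖ := norm_add_le _ _
      _ ≤ 1/(x₁.re+k) + 1/(x₂.re+k) := add_le_add (hinv x₁ hre₁ k) (hinv x₂ hre₂ k)
  have hsummable : Summable (fun k : ℕ => ‖bcoef s k * (1 / (x₁ + k) + 1 / (x₂ + k))‖) :=
    Summable.of_nonneg_of_le (fun k => norm_nonneg _) hterm_bd hmaj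
  refine ⟨hsummable, ?_⟩
  -- the integral swap
  set μ : Measure ℝ := volume.restrict (Ioo (0:ℝ) (1/2)) with hμ
  set F : ℕ → ℝ → ℂ := fun k u => bcoef s k *
      ((u:ℂ)^((x₁+k)-1) * ((1-u:ℝ):ℂ)^(-(x₁+k)-1)
        + (u:ℂ)^((x₂+k)-1) * ((1-u:ℝ):ℂ)^(-(x₂+k)-1)) with hF
  have hre₁k : ∀ k : ℕ, 0 < (x₁+(k:ℂ)).re := by
    intro k; rw [Complex.add_re, Complex.natCast_re]; positivity
  have hre₂k : ∀ k : ℕ, 0 < (x₂+(k:ℂ)).re := by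
    intro k; rw [Complex.add_re, Complex.natCast_re]; positivity
  have hint : ∀ k, Integrable (F k) μ := by
    intro k
    exact ((kernel_integrable (hre₁k k)).add (kernel_integrable (hre₂k k))).const_mul _
  have hre₁k' : ∀ k : ℕ, (0:ℝ) < x₁.re + k := fun k => by positivity
  have hre₂k' : ∀ k : ℕ, (0:ℝ) < x₂.re + k := fun k => by positivity
  -- norm integral of kernels
  have hknorm : ∀ (x : ℂ), 0 < x.re → ∀ k : ℕ,
      ∫ u, ‖(u:ℂ)^((x+k)-1) * ((1-u:ℝ):ℂ)^(-(x+k)-1)‖ ∂μ = 1/(x.re+k) := by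
    intro x hx k
    rw [hμ]
    have heq : EqOn (fun u : ℝ => ‖(u:ℂ)^((x+k)-1) * ((1-u:ℝ):ℂ)^(-(x+k)-1)‖)
        (fun u : ℝ => u^((x.re+k)-1) * (1-u)^(-(x.re+k)-1)) (Ioo (0:ℝ) (1/2)) := by
      intro u hu
      have h1u : (0:ℝ) < 1-u := by have h := hu.2; norm_num at h ⊢; linarith
      show ‖(u:ℂ)^((x+k)-1) * ((1-u:ℝ):ℂ)^(-(x+k)-1)‖ = _
      rw [norm_mul,
        Complex.norm_cpow_eq_rpow_re_of_pos hu.1, Complex.norm_cpow_eq_rpow_re_of_pos h1u]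
      simp only [Complex.sub_re, Complex.add_re, Complex.neg_re, Complex.natCast_re,
        Complex.one_re]
    rw [setIntegral_congr_fun measurableSet_Ioo heq]
    exact kernel_integral_real (by positivity)
  -- summability of norm integrals
  have hnormint : ∀ k, ∫ u, ‖F k u‖ ∂μ ≤ ‖bcoef s k‖ * (1/(x₁.re+k) + 1/(x₂.re+k)) := by
    intro k
    have hi1 := (kernel_integrable (hre₁k k)).norm
    have hi2 := (kernel_integrable (hre₂k k)).norm
    rw [← hμ] at hi1 hi2
    have hg : Integrable (fun u : ℝ => ‖bcoef s k‖ *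
        (‖(u:ℂ)^((x₁+k)-1) * ((1-u:ℝ):ℂ)^(-(x₁+k)-1)‖
          + ‖(u:ℂ)^((x₂+k)-1) * ((1-u:ℝ):ℂ)^(-(x₂+k)-1)‖)) μ :=
      (hi1.add hi2).const_mul _
    have hle : ∀ u, ‖F k u‖ ≤ ‖bcoef s k‖ *
        (‖(u:ℂ)^((x₁+k)-1) * ((1-u:ℝ):ℂ)^(-(x₁+k)-1)‖
          + ‖(u:ℂ)^((x₂+k)-1) * ((1-u:ℝ):ℂ)^(-(x₂+k)-1)‖) := by
      intro u
      rw [hF]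
      show ‖bcoef s k * _‖ ≤ _
      rw [norm_mul]
      exact mul_le_mul_of_nonneg_left (norm_add_le _ _) (norm_nonneg _)
    have h1 := integral_mono_of_nonneg (ae_of_all _ fun u => norm_nonneg (F k u)) hg
      (ae_of_all _ hle)
    refine h1.trans ?_
    rw [integral_const_mul, integral_add hi1 hi2, hknorm x₁ hre₁ k, hknorm x₂ hre₂ k]
  have hF_sum : Summable (fun k => ∫ u, ‖F k u‖ ∂μ) := by
    apply Summable.of_nonneg_of_le
      (fun k => integral_nonneg (fun u => norm_nonneg _))
      (fun k => (hnormint k).trans (hkey k)) hmaj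
  have hswap := hasSum_integral_of_summable_integral_norm hint hF_sum
  -- value of each integral
  have hval : (fun k => ∫ u, F k u ∂μ)
      = (fun k => bcoef s k * (1 / (x₁ + k) + 1 / (x₂ + k))) := by
    funext k
    show ∫ u, bcoef s k * _ ∂μ = _
    rw [integral_const_mul, hμ,
      integral_add (kernel_integrable (hre₁k k)) (kernel_integrable (hre₂k k)),
      kernel_integral (hre₁k k), kernel_integral (hre₂k k)]
  -- the integral of the tsum
  have htsum : ∫ u, (∑' k, F k u) ∂μ
      = Complex.Gamma x₁ * Complex.Gamma x₂ / Complex.Gamma s := by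
    have hstep1 : ∫ u, (∑' k, F k u) ∂μ = ∫ u in Ioo (0:ℝ) (1/2),
        ((u:ℂ)^(x₁-1) * ((1:ℂ)-(u:ℂ))^(x₂-1) + (u:ℂ)^(x₂-1) * ((1:ℂ)-(u:ℂ))^(x₁-1)) := by
      rw [hμ]
      apply setIntegral_congr_fun measurableSet_Ioo
      intro u hu
      have h1 := hasSum_component (x := x₁) hs0 hs1 hu.1 hu.2
      have h2 := hasSum_component (x := x₂) hs0 hs1 hu.1 hu.2
      have hadd := h1.add h2
      have hfun : (fun k : ℕ => bcoef s k * ((u:ℂ)^((x₁+k)-1) * ((1-u:ℝ):ℂ)^(-(x₁+k)-1))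
          + bcoef s k * ((u:ℂ)^((x₂+k)-1) * ((1-u:ℝ):ℂ)^(-(x₂+k)-1)))
          = fun k => F k u := by
        funext k
        show _ = bcoef s k * _
        ring
      rw [hfun] at hadd
      show (∑' k, F k u) = _
      rw [hadd.tsum_eq]
      have hc1 : ((1-u:ℝ):ℂ) = (1:ℂ) - (u:ℂ) := by push_cast; ring
      have he1 : s - x₁ - 1 = x₂ - 1 := by rw [hsdef]; ring
      have he2 : s - x₂ - 1 = x₁ - 1 := by rw [hsdef]; ring
      rw [he1, he2, hc1]
    rw [hstep1]
    -- beta split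
    set Jb : ℝ → ℂ := fun u => (u:ℂ)^(x₁-1) * ((1:ℂ)-(u:ℂ))^(x₂-1) with hJb
    set Jb' : ℝ → ℂ := fun u => (u:ℂ)^(x₂-1) * ((1:ℂ)-(u:ℂ))^(x₁-1) with hJb'
    have hJ1 : IntervalIntegrable Jb volume 0 1 := Complex.betaIntegral_convergent hre₁ hre₂
    have hJ2 : IntervalIntegrable Jb' volume 0 1 := Complex.betaIntegral_convergent hre₂ hre₁
    have hsub : uIcc (0:ℝ) (1/2) ⊆ uIcc (0:ℝ) 1 := by
      rw [uIcc_of_le (by norm_num : (0:ℝ) ≤ 1/2), uIcc_of_le (by norm_num : (0:ℝ) ≤ 1)]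
      exact Icc_subset_Icc le_rfl (by norm_num)
    have hsub2 : uIcc ((1:ℝ)/2) 1 ⊆ uIcc (0:ℝ) 1 := by
      rw [uIcc_of_le (by norm_num : (1:ℝ)/2 ≤ 1), uIcc_of_le (by norm_num : (0:ℝ) ≤ 1)]
      exact Icc_subset_Icc (by norm_num) le_rfl
    have hJ1h : IntervalIntegrable Jb volume 0 (1/2) := hJ1.mono_set hsub
    have hJ2h : IntervalIntegrable Jb' volume 0 (1/2) := hJ2.mono_set hsub
    have hJ1h2 : IntervalIntegrable Jb volume (1/2) 1 := hJ1.mono_set hsub2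
    have hIoo : ∫ u in Ioo (0:ℝ) (1/2), (Jb u + Jb' u)
        = ∫ u in (0:ℝ)..(1/2), (Jb u + Jb' u) := by
      rw [intervalIntegral.integral_of_le (by norm_num : (0:ℝ) ≤ 1/2),
        integral_Ioc_eq_integral_Ioo]
    have hreflect : ∫ u in (0:ℝ)..(1/2), Jb' u = ∫ u in ((1:ℝ)/2)..1, Jb u := by
      have hcomp := intervalIntegral.integral_comp_sub_left (a := 0) (b := 1/2) Jb 1
      have hfe : (fun x : ℝ => Jb (1-x)) = Jb' := by
        funext x
        show ((1-x:ℝ):ℂ)^(x₁-1) * ((1:ℂ) - ((1-x:ℝ):ℂ))^(x₂-1) = _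
        show _ = (x:ℂ)^(x₂-1) * ((1:ℂ)-(x:ℂ))^(x₁-1)
        rw [Complex.ofReal_sub, Complex.ofReal_one, sub_sub_cancel]
        ring
      rw [hfe] at hcomp
      norm_num at hcomp
      convert hcomp using 2 <;> norm_num
    have hjoin : (∫ u in (0:ℝ)..(1/2), Jb u) + ∫ u in ((1:ℝ)/2)..1, Jb u
        = ∫ u in (0:ℝ)..1, Jb u :=
      intervalIntegral.integral_add_adjacent_intervals hJ1h hJ1h2
    have hbeta : Complex.betaIntegral x₁ x₂ = ∫ u in (0:ℝ)..1, Jb u := rfl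
    have hΓne : Complex.Gamma s ≠ 0 := by
      apply Complex.Gamma_ne_zero
      intro m hm
      rw [hm] at hs0
      simp only [Complex.neg_re, Complex.natCast_re] at hs0
      have : (0:ℝ) ≤ (m:ℝ) := Nat.cast_nonneg m
      linarith
    have hΓ : Complex.Gamma x₁ * Complex.Gamma x₂ / Complex.Gamma s
        = Complex.betaIntegral x₁ x₂ := by
      rw [hsdef, Complex.Gamma_mul_Gamma_eq_betaIntegral hre₁ hre₂, ← hsdef,
        mul_div_cancel_left₀ _ hΓne]
    rw [hΓ, hbeta, ← hjoin, hIoo, intervalIntegral.integral_add hJ1h hJ2h, hreflect]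
  rw [hval, htsum] at hswap
  exact hswap.tendsto_sum_nat
end
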